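/- arXiv:0902.0886 — 4 statements merged into one kernel-verified Lean document; each statement's English description precedes it below -/
import Mathlib

section
/- Let λ_j : ℝ → [0,∞) for j ∈ ℤ∖{0} satisfy σ²(z) := Σ_{j≠0} j²·λ_j(z) < ∞ for every z ∈ ℝ, let n ≥ 1 be an integer, and let h : ℤ → ℝ have bounded differences, i.e. sup_{i∈ℤ} |h(i+1) − h(i)| < ∞. Set g(i) := h(i+1) − h(i) and ∇g(i) := g(i) − g(i−1). Then for every i ∈ ℤ all the series below converge absolutely, and Σ_{j≠0} n·λ_j(i/n)·(h(i+j) − h(i)) = (n/2)·σ²(i/n)·∇g(i) + n·F(i/n)·g(i) − (n/2)·F(i/n)·∇g(i) + Σ_{j≥2} a_j(g,i)·n·λ_j(i/n) − Σ_{j≥2} b_j(g,i)·n·λ_{−j}(i/n), where F(z) := Σ_{j≠0} j·λ_j(z), a_j(g,i) := −(j(j−1)/2)·∇g(i) + Σ_{k=1}^{j−1} k·∇g(i+j−k), and b_j(g,i) := (j(j−1)/2)·∇g(i) − Σ_{k=1}^{j−1} k·∇g(i−j+k). -/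
noncomputable section

/-- The backward difference `∇g(i) = g(i) − g(i−1)`. -/
def del (g : ℤ → ℝ) (i : ℤ) : ℝ := g i - g (i - 1)

/-- The coefficient `a_j(g,i)` from the generator decomposition. -/
def aCoef (g : ℤ → ℝ) (j i : ℤ) : ℝ :=
  -((j : ℝ) * ((j : ℝ) - 1) / 2) * del g i
    + ∑ k ∈ Finset.Icc 1 (j - 1), (k : ℝ) * del g (i + j - k)

/-- The coefficient `b_j(g,i)` from the generator decomposition. -/
def bCoef (g : ℤ → ℝ) (j i : ℤ) : ℝ :=
  ((j : ℝ) * ((j : ℝ) - 1) / 2) * del g i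
    - ∑ k ∈ Finset.Icc 1 (j - 1), (k : ℝ) * del g (i - j + k)

lemma sum_Icc_top (a b : ℤ) (h : a ≤ b + 1) (f : ℤ → ℝ) :
    ∑ k ∈ Finset.Icc a (b+1), f k = ∑ k ∈ Finset.Icc a b, f k + f (b+1) := by
  have : Finset.Icc a (b+1) = insert (b+1) (Finset.Icc a b) := by
    ext x; simp only [Finset.mem_Icc, Finset.mem_insert]; omega
  rw [this, Finset.sum_insert (by simp only [Finset.mem_Icc]; omega)]
  ring

lemma tele (g : ℤ → ℝ) (i : ℤ) : ∀ j : ℕ,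
    g (i + j) = g i + ∑ m ∈ Finset.Icc (1:ℤ) (j:ℤ), del g (i + m)
  | 0 => by simp
  | (j+1) => by
    have e : ∑ m ∈ Finset.Icc (1:ℤ) ((j+1:ℕ):ℤ), del g (i + m)
        = (∑ m ∈ Finset.Icc (1:ℤ) (j:ℤ), del g (i + m)) + del g (i + ((j:ℤ)+1)) := by
      rw [show ((j+1:ℕ):ℤ) = (j:ℤ) + 1 by push_cast; ring]
      exact sum_Icc_top 1 j (by omega) _
    rw [e]
    have := tele g i j
    simp only [del] at *
    rw [show i + ((j+1:ℕ):ℤ) = i + ((j:ℤ)+1) by push_cast; ring,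
      show i + ((j:ℤ)+1) - 1 = i + j by ring]
    linarith [this]

lemma hsum (h : ℤ → ℝ) (i : ℤ) : ∀ j : ℕ,
    h (i + j) - h i = ∑ l ∈ Finset.range j, (h (i + l + 1) - h (i + l))
  | 0 => by simp
  | (j+1) => by
    rw [Finset.sum_range_succ, ← hsum h i j]
    rw [show i + ((j+1:ℕ):ℤ) = i + (j:ℤ) + 1 by push_cast; ring]
    ring

lemma drop_top (b : ℤ) (f : ℤ → ℝ) (hf : f b = 0) :
    ∑ m ∈ Finset.Icc 1 b, f m = ∑ m ∈ Finset.Icc 1 (b-1), f m := by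
  rcases le_or_gt 1 b with hb | hb
  · have := sum_Icc_top 1 (b-1) (by omega) f
    rw [show b - 1 + 1 = b by ring] at this
    rw [this, hf]; ring
  · rw [Finset.Icc_eq_empty (by omega), Finset.Icc_eq_empty (by omega)]

lemma posId (g h : ℤ → ℝ) (hg : ∀ l, g l = h (l + 1) - h l) (i : ℤ) : ∀ j : ℕ,
    h (i + j) - h i = (j:ℝ) * g i
      + ∑ m ∈ Finset.Icc (1:ℤ) ((j:ℤ)-1), ((j:ℝ) - (m:ℝ)) * del g (i + m)
  | 0 => by simp
  | (j+1) => by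
    have ih := posId g h hg i j
    have ht := tele g i j
    have hh : h (i + ((j+1:ℕ):ℤ)) = h (i + (j:ℤ)) + g (i + (j:ℤ)) := by
      rw [hg]; push_cast; ring_nf
    have c1 : ((j+1:ℕ):ℤ) - 1 = (j:ℤ) := by push_cast; ring
    rw [hh, c1]
    have split : ∑ m ∈ Finset.Icc (1:ℤ) (j:ℤ), (((j+1:ℕ):ℝ) - (m:ℝ)) * del g (i + m)
        = (∑ m ∈ Finset.Icc (1:ℤ) (j:ℤ), ((j:ℝ) - (m:ℝ)) * del g (i + m))
          + ∑ m ∈ Finset.Icc (1:ℤ) (j:ℤ), del g (i + m) := by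
      rw [← Finset.sum_add_distrib]
      apply Finset.sum_congr rfl
      intro m _; push_cast; ring
    have drop : ∑ m ∈ Finset.Icc (1:ℤ) (j:ℤ), ((j:ℝ) - (m:ℝ)) * del g (i + m)
        = ∑ m ∈ Finset.Icc (1:ℤ) ((j:ℤ)-1), ((j:ℝ) - (m:ℝ)) * del g (i + m) :=
      drop_top (j:ℤ) _ (by simp)
    rw [split, drop]
    push_cast
    linarith [ih, ht]

lemma aSum_eq (g : ℤ → ℝ) (i j : ℤ) :
    ∑ k ∈ Finset.Icc (1:ℤ) (j - 1), (k : ℝ) * del g (i + j - k)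
      = ∑ m ∈ Finset.Icc (1:ℤ) (j - 1), ((j:ℝ) - (m:ℝ)) * del g (i + m) := by
  apply Finset.sum_nbij' (fun k => j - k) (fun m => j - m)
  · intro a ha; simp only [Finset.mem_Icc] at *; omega
  · intro a ha; simp only [Finset.mem_Icc] at *; omega
  · intro a _; ring
  · intro a _; ring
  · intro a ha
    have : (((j - a : ℤ)):ℝ) = (j:ℝ) - (a:ℝ) := by push_cast; ring
    rw [this]
    have : i + (j - a) = i + j - a := by ring
    rw [this]
    ring

lemma posPt (g h : ℤ → ℝ) (hg : ∀ l, g l = h (l + 1) - h l) (i : ℤ) (j : ℕ) :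
    h (i + (j:ℤ)) - h i = (j:ℝ)^2/2 * del g i + (j:ℝ) * g i - (j:ℝ)/2 * del g i
      + aCoef g (j:ℤ) i := by
  rw [posId g h hg i j, aCoef, aSum_eq]
  push_cast
  ring

lemma negPt (g h : ℤ → ℝ) (hg : ∀ l, g l = h (l + 1) - h l) (i : ℤ) (j : ℕ) :
    h (i - (j:ℤ)) - h i = (j:ℝ)^2/2 * del g i - (j:ℝ) * g i + (j:ℝ)/2 * del g i
      - bCoef g (j:ℤ) i := by
  rcases Nat.eq_zero_or_pos j with rfl | hj
  · simp [bCoef]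
  have E1 := posId g h hg (i - (j:ℤ)) j
  rw [show i - (j:ℤ) + (j:ℤ) = i by ring] at E1
  have E2 := tele g (i - (j:ℤ)) j
  rw [show i - (j:ℤ) + (j:ℤ) = i by ring] at E2
  have hsplit : ∑ m ∈ Finset.Icc (1:ℤ) (j:ℤ), del g (i - (j:ℤ) + m)
      = (∑ m ∈ Finset.Icc (1:ℤ) ((j:ℤ)-1), del g (i - (j:ℤ) + m)) + del g i := by
    have := sum_Icc_top 1 ((j:ℤ)-1) (by omega) (fun m => del g (i - (j:ℤ) + m))
    rw [show (j:ℤ) - 1 + 1 = (j:ℤ) by ring] at this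
    rw [this, show i - (j:ℤ) + (j:ℤ) = i by ring]
  rw [hsplit] at E2
  have TS : (∑ k ∈ Finset.Icc (1:ℤ) ((j:ℤ) - 1), (k:ℝ) * del g (i - (j:ℤ) + k))
      + (∑ m ∈ Finset.Icc (1:ℤ) ((j:ℤ)-1), ((j:ℝ) - (m:ℝ)) * del g (i - (j:ℤ) + m))
      = (j:ℝ) * ∑ m ∈ Finset.Icc (1:ℤ) ((j:ℤ)-1), del g (i - (j:ℤ) + m) := by
    rw [← Finset.sum_add_distrib, Finset.mul_sum]
    apply Finset.sum_congr rfl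
    intro m _; ring
  rw [bCoef]
  push_cast at E1 TS ⊢
  linear_combination (-1:ℝ) * E1 + (j:ℝ) * E2 - TS

lemma int_abs_le_sq (j : ℤ) : |(j:ℝ)| ≤ (j:ℝ)^2 := by
  rcases eq_or_ne j 0 with rfl | hj
  · simp
  · have h1 : (1:ℝ) ≤ |(j:ℝ)| := by
      have := Int.one_le_abs hj
      calc (1:ℝ) = ((1:ℤ):ℝ) := by norm_num
        _ ≤ ((|j|:ℤ):ℝ) := by exact_mod_cast this
        _ = |(j:ℝ)| := by push_cast; rfl
    nlinarith [abs_nonneg (j:ℝ), sq_abs (j:ℝ)]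

lemma sum_abs_bound (g : ℤ → ℝ) (D : ℝ) (hD : ∀ l, |del g l| ≤ D)
    (j : ℤ) (hj : 0 ≤ j) (c : ℤ → ℤ) :
    |∑ k ∈ Finset.Icc (1:ℤ) (j - 1), (k : ℝ) * del g (c k)| ≤ (j:ℝ) * ((j:ℝ) * D) := by
  have hD0 : 0 ≤ D := le_trans (abs_nonneg _) (hD 0)
  have hcard : ((Finset.Icc (1:ℤ) (j-1)).card : ℝ) ≤ (j:ℝ) := by
    rw [Int.card_Icc]
    have h1 : (j - 1 + 1 - 1).toNat ≤ j.toNat := by omega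
    have h2 : ((j.toNat : ℤ) : ℝ) = (j:ℝ) := by rw [Int.toNat_of_nonneg hj]
    calc ((j - 1 + 1 - 1).toNat : ℝ) ≤ (j.toNat : ℝ) := by exact_mod_cast h1
      _ = (j:ℝ) := by exact_mod_cast h2
  calc |∑ k ∈ Finset.Icc (1:ℤ) (j - 1), (k : ℝ) * del g (c k)|
      ≤ ∑ k ∈ Finset.Icc (1:ℤ) (j - 1), |(k : ℝ) * del g (c k)| :=
        Finset.abs_sum_le_sum_abs _ _
    _ ≤ ∑ _k ∈ Finset.Icc (1:ℤ) (j - 1), (j:ℝ) * D := by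
        apply Finset.sum_le_sum
        intro k hk
        simp only [Finset.mem_Icc] at hk
        rw [abs_mul]
        have h1 : |(k:ℝ)| ≤ (j:ℝ) := by
          rw [abs_of_nonneg (by exact_mod_cast (by omega : (0:ℤ) ≤ k))]
          exact_mod_cast (by omega : k ≤ j)
        exact mul_le_mul h1 (hD _) (abs_nonneg _) (by positivity)
    _ = ((Finset.Icc (1:ℤ) (j-1)).card : ℝ) * ((j:ℝ) * D) := by
        rw [Finset.sum_const, nsmul_eq_mul]
    _ ≤ (j:ℝ) * ((j:ℝ) * D) := mul_le_mul_of_nonneg_right hcard (by positivity)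

lemma coef_abs_bound (g : ℤ → ℝ) (D : ℝ) (hD : ∀ l, |del g l| ≤ D)
    (j : ℤ) (hj : 0 ≤ j) (x : ℝ) (hx : |x| ≤ D) :
    |(j : ℝ) * ((j : ℝ) - 1) / 2 * x| ≤ (j:ℝ)^2/2 * D := by
  have hD0 : 0 ≤ D := le_trans (abs_nonneg _) (hD 0)
  rw [abs_mul]
  have hkey : |(j : ℝ) * ((j : ℝ) - 1) / 2| ≤ (j:ℝ)^2/2 := by
    rcases eq_or_lt_of_le hj with rfl | hj1
    · norm_num
    · have hj1' : (1:ℝ) ≤ (j:ℝ) := by exact_mod_cast hj1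
      rw [abs_of_nonneg (by nlinarith)]
      nlinarith
  exact mul_le_mul hkey hx (abs_nonneg _) (by positivity)

lemma aCoef_bound (g : ℤ → ℝ) (i : ℤ) (D : ℝ) (hD : ∀ l, |del g l| ≤ D)
    (j : ℤ) (hj : 0 ≤ j) : |aCoef g j i| ≤ 3/2 * D * (j:ℝ)^2 := by
  have h1 : |(-((j : ℝ) * ((j : ℝ) - 1) / 2) * del g i)| ≤ (j:ℝ)^2/2 * D := by
    rw [show (-((j : ℝ) * ((j : ℝ) - 1) / 2) * del g i)
      = -((j : ℝ) * ((j : ℝ) - 1) / 2 * del g i) by ring, abs_neg]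
    exact coef_abs_bound g D hD j hj _ (hD i)
  have h2 := sum_abs_bound g D hD j hj (fun k => i + j - k)
  calc |aCoef g j i| ≤ |(-((j : ℝ) * ((j : ℝ) - 1) / 2) * del g i)|
        + |∑ k ∈ Finset.Icc (1:ℤ) (j - 1), (k : ℝ) * del g (i + j - k)| := abs_add_le _ _
    _ ≤ (j:ℝ)^2/2 * D + (j:ℝ) * ((j:ℝ) * D) := add_le_add h1 h2
    _ = 3/2 * D * (j:ℝ)^2 := by ring

lemma bCoef_bound (g : ℤ → ℝ) (i : ℤ) (D : ℝ) (hD : ∀ l, |del g l| ≤ D)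
    (j : ℤ) (hj : 0 ≤ j) : |bCoef g j i| ≤ 3/2 * D * (j:ℝ)^2 := by
  have h1 : |((j : ℝ) * ((j : ℝ) - 1) / 2 * del g i)| ≤ (j:ℝ)^2/2 * D :=
    coef_abs_bound g D hD j hj _ (hD i)
  have h2 := sum_abs_bound g D hD j hj (fun k => i - j + k)
  calc |bCoef g j i| ≤ |((j : ℝ) * ((j : ℝ) - 1) / 2 * del g i)|
        + |∑ k ∈ Finset.Icc (1:ℤ) (j - 1), (k : ℝ) * del g (i - j + k)| := abs_sub _ _
    _ ≤ (j:ℝ)^2/2 * D + (j:ℝ) * ((j:ℝ) * D) := add_le_add h1 h2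
    _ = 3/2 * D * (j:ℝ)^2 := by ring

lemma diff_bound_nat (h : ℤ → ℝ) (M : ℝ) (hM : ∀ l : ℤ, |h (l + 1) - h l| ≤ M)
    (i : ℤ) (m : ℕ) : |h (i + (m:ℤ)) - h i| ≤ M * m := by
  rw [hsum h i m]
  calc |∑ l ∈ Finset.range m, (h (i + l + 1) - h (i + l))|
      ≤ ∑ l ∈ Finset.range m, |h (i + l + 1) - h (i + l)| := Finset.abs_sum_le_sum_abs _ _
    _ ≤ ∑ _l ∈ Finset.range m, M := Finset.sum_le_sum (fun l _ => hM _)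
    _ = M * m := by rw [Finset.sum_const, nsmul_eq_mul, Finset.card_range]; ring

lemma diff_bound (h : ℤ → ℝ) (M : ℝ) (hM : ∀ l : ℤ, |h (l + 1) - h l| ≤ M)
    (i j : ℤ) : |h (i + j) - h i| ≤ M * |(j:ℝ)| := by
  rcases Int.eq_nat_or_neg j with ⟨m, rfl | rfl⟩
  · have := diff_bound_nat h M hM i m
    rwa [show |((m:ℤ):ℝ)| = ((m:ℕ):ℝ) by push_cast; exact abs_of_nonneg (by positivity)]
  · have := diff_bound_nat h M hM (i - (m:ℤ)) m
    rw [show i - (m:ℤ) + (m:ℤ) = i by ring] at this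
    rw [show i + -(m:ℤ) = i - (m:ℤ) by ring, abs_sub_comm]
    have e : ((-(m:ℤ) : ℤ) : ℝ) = -((m:ℕ):ℝ) := by push_cast; ring
    rw [e, abs_neg, abs_of_nonneg (by positivity : (0:ℝ) ≤ ((m:ℕ):ℝ))]
    exact this

lemma aCoef_zero (g : ℤ → ℝ) (i : ℤ) : aCoef g 0 i = 0 := by
  rw [aCoef, Finset.Icc_eq_empty (by omega)]; simp

lemma masterPt (g h : ℤ → ℝ) (hg : ∀ l, g l = h (l + 1) - h l) (i : ℤ) (j : ℤ) :
    h (i + j) - h i = (j:ℝ)^2/2 * del g i + (j:ℝ) * g i - (j:ℝ)/2 * del g i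
      + (if 0 ≤ j then aCoef g j i else -(bCoef g (-j) i)) := by
  rcases Int.eq_nat_or_neg j with ⟨m, rfl | rfl⟩
  · rw [if_pos (by positivity)]
    have := posPt g h hg i m
    push_cast at this ⊢
    linarith
  · rcases Nat.eq_zero_or_pos m with rfl | hm
    · simp [aCoef_zero]
    · rw [if_neg (by omega), neg_neg]
      have := negPt g h hg i m
      rw [show i + -(m:ℤ) = i - (m:ℤ) by ring]
      push_cast at this ⊢
      linarith

lemma aCoef_one (g : ℤ → ℝ) (i : ℤ) : aCoef g 1 i = 0 := by
  rw [aCoef, Finset.Icc_eq_empty (by omega)]; norm_num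

lemma bCoef_one (g : ℤ → ℝ) (i : ℤ) : bCoef g 1 i = 0 := by
  rw [bCoef, Finset.Icc_eq_empty (by omega)]; norm_num

lemma split_c (g : ℤ → ℝ) (i : ℤ) (w : ℤ → ℝ) (j : ℤ) :
    w j * (if 0 ≤ j then aCoef g j i else -(bCoef g (-j) i))
      = (if 2 ≤ j then aCoef g j i * w j else 0)
        - (if j ≤ -2 then bCoef g (-j) i * w j else 0) := by
  by_cases h2 : 2 ≤ j
  · rw [if_pos (by omega), if_pos h2, if_neg (by omega)]; ring
  · by_cases h2' : j ≤ -2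
    · rw [if_neg (by omega), if_neg h2, if_pos h2']; ring
    · rw [if_neg h2, if_neg h2']
      have hj : j = -1 ∨ j = 0 ∨ j = 1 := by omega
      rcases hj with rfl | rfl | rfl
      · rw [if_neg (by omega)]; norm_num [bCoef_one]
      · rw [if_pos (by omega)]; norm_num [aCoef_zero]
      · rw [if_pos (by omega)]; norm_num [aCoef_one]

/-- Exact decomposition of the generator `(𝒜_n h)(i) = Σ_{j≠0} n λ_j(i/n)(h(i+j) − h(i))`
for `h` with bounded differences (with `g(i) = h(i+1) − h(i)`), together with the
absolute convergence of all the series involved. -/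
theorem generator_decomposition
    (lam : ℤ → ℝ → ℝ)
    (lam_nonneg : ∀ j z, 0 ≤ lam j z)
    (lam_zero : ∀ z, lam 0 z = 0)
    (hσ : ∀ z : ℝ, Summable (fun j : ℤ => (j : ℝ) ^ 2 * lam j z))
    (n : ℕ) (hn : 1 ≤ n)
    (h : ℤ → ℝ) (hbd : ∃ M : ℝ, ∀ i : ℤ, |h (i + 1) - h i| ≤ M) (i : ℤ) :
    Summable (fun j : ℤ => |(n : ℝ) * lam j ((i : ℝ) / n) * (h (i + j) - h i)|) ∧
    Summable (fun j : ℤ => |(j : ℝ) * lam j ((i : ℝ) / n)|) ∧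
    Summable (fun m : ℕ =>
      |aCoef (fun l => h (l + 1) - h l) ((m : ℤ) + 2) i
        * ((n : ℝ) * lam ((m : ℤ) + 2) ((i : ℝ) / n))|) ∧
    Summable (fun m : ℕ =>
      |bCoef (fun l => h (l + 1) - h l) ((m : ℤ) + 2) i
        * ((n : ℝ) * lam (-((m : ℤ) + 2)) ((i : ℝ) / n))|) ∧
    (∑' j : ℤ, (n : ℝ) * lam j ((i : ℝ) / n) * (h (i + j) - h i))
      = (n : ℝ) / 2 * (∑' j : ℤ, (j : ℝ) ^ 2 * lam j ((i : ℝ) / n))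
            * del (fun l => h (l + 1) - h l) i
        + (n : ℝ) * (∑' j : ℤ, (j : ℝ) * lam j ((i : ℝ) / n)) * (h (i + 1) - h i)
        - (n : ℝ) / 2 * (∑' j : ℤ, (j : ℝ) * lam j ((i : ℝ) / n))
            * del (fun l => h (l + 1) - h l) i
        + (∑' m : ℕ, aCoef (fun l => h (l + 1) - h l) ((m : ℤ) + 2) i
            * ((n : ℝ) * lam ((m : ℤ) + 2) ((i : ℝ) / n)))
        - (∑' m : ℕ, bCoef (fun l => h (l + 1) - h l) ((m : ℤ) + 2) i
            * ((n : ℝ) * lam (-((m : ℤ) + 2)) ((i : ℝ) / n))) := by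
  obtain ⟨M, hM⟩ := hbd
  have hM0 : 0 ≤ M := le_trans (abs_nonneg _) (hM 0)
  set g : ℤ → ℝ := fun l => h (l + 1) - h l with hgdef
  have hg : ∀ l, g l = h (l + 1) - h l := fun l => rfl
  set z : ℝ := (i : ℝ) / n with hzdef
  have hdel : ∀ l, |del g l| ≤ 2 * M := by
    intro l
    calc |del g l| ≤ |g l| + |g (l-1)| := abs_sub _ _
      _ ≤ M + M := add_le_add (hM l) (hM (l-1))
      _ = 2 * M := by ring
  have S2 : Summable (fun j : ℤ => (j : ℝ) ^ 2 * lam j z) := hσ z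
  have absSummable : ∀ (f : ℤ → ℝ) (C : ℝ),
      (∀ j : ℤ, |f j| ≤ C * ((j:ℝ)^2 * lam j z)) → Summable (fun j => |f j|) :=
    fun f C hf => Summable.of_nonneg_of_le (fun _ => abs_nonneg _) hf (S2.mul_left C)
  have hn0 : (0:ℝ) ≤ (n:ℝ) := by positivity
  -- claim 1
  have claim1 : Summable (fun j : ℤ => |(n : ℝ) * lam j z * (h (i + j) - h i)|) := by
    apply absSummable _ ((n:ℝ) * M)
    intro j
    rw [abs_mul, abs_mul, abs_of_nonneg hn0, abs_of_nonneg (lam_nonneg j z)]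
    have h1 : |h (i + j) - h i| ≤ M * (j:ℝ)^2 :=
      le_trans (diff_bound h M hM i j) (mul_le_mul_of_nonneg_left (int_abs_le_sq j) hM0)
    calc (n:ℝ) * lam j z * |h (i + j) - h i| ≤ (n:ℝ) * lam j z * (M * (j:ℝ)^2) := by
          apply mul_le_mul_of_nonneg_left h1 (mul_nonneg hn0 (lam_nonneg j z))
      _ = (n:ℝ) * M * ((j:ℝ)^2 * lam j z) := by ring
  -- claim 2
  have claim2 : Summable (fun j : ℤ => |(j : ℝ) * lam j z|) := by
    apply absSummable _ 1
    intro j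
    rw [abs_mul, abs_of_nonneg (lam_nonneg j z), one_mul]
    exact mul_le_mul_of_nonneg_right (int_abs_le_sq j) (lam_nonneg j z)
  have S1 : Summable (fun j : ℤ => (j : ℝ) * lam j z) := claim2.of_abs
  -- Ra, Rb
  have RaAbs : Summable (fun j : ℤ =>
      |(if 2 ≤ j then aCoef g j i * ((n:ℝ) * lam j z) else 0)|) := by
    apply absSummable _ (3 * M * (n:ℝ))
    intro j
    by_cases h2 : 2 ≤ j
    · rw [if_pos h2, abs_mul]
      have hb := aCoef_bound g i (2*M) hdel j (by omega)
      have hw : |(n:ℝ) * lam j z| = (n:ℝ) * lam j z := by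
        rw [abs_mul, abs_of_nonneg hn0, abs_of_nonneg (lam_nonneg j z)]
      rw [hw]
      calc |aCoef g j i| * ((n:ℝ) * lam j z) ≤ (3/2 * (2*M) * (j:ℝ)^2) * ((n:ℝ) * lam j z) := by
            apply mul_le_mul_of_nonneg_right hb (mul_nonneg hn0 (lam_nonneg j z))
        _ = 3 * M * (n:ℝ) * ((j:ℝ)^2 * lam j z) := by ring
    · rw [if_neg h2, abs_zero]
      have := lam_nonneg j z
      positivity
  have RbAbs : Summable (fun j : ℤ =>
      |(if j ≤ -2 then bCoef g (-j) i * ((n:ℝ) * lam j z) else 0)|) := by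
    apply absSummable _ (3 * M * (n:ℝ))
    intro j
    by_cases h2 : j ≤ -2
    · rw [if_pos h2, abs_mul]
      have hb := bCoef_bound g i (2*M) hdel (-j) (by omega)
      have hsq : ((-j : ℤ):ℝ)^2 = (j:ℝ)^2 := by push_cast; ring
      rw [hsq] at hb
      have hw : |(n:ℝ) * lam j z| = (n:ℝ) * lam j z := by
        rw [abs_mul, abs_of_nonneg hn0, abs_of_nonneg (lam_nonneg j z)]
      rw [hw]
      calc |bCoef g (-j) i| * ((n:ℝ) * lam j z) ≤ (3/2 * (2*M) * (j:ℝ)^2) * ((n:ℝ) * lam j z) := by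
            apply mul_le_mul_of_nonneg_right hb (mul_nonneg hn0 (lam_nonneg j z))
        _ = 3 * M * (n:ℝ) * ((j:ℝ)^2 * lam j z) := by ring
    · rw [if_neg h2, abs_zero]
      have := lam_nonneg j z
      positivity
  have SRa : Summable (fun j : ℤ => if 2 ≤ j then aCoef g j i * ((n:ℝ) * lam j z) else 0) :=
    RaAbs.of_abs
  have SRb : Summable (fun j : ℤ => if j ≤ -2 then bCoef g (-j) i * ((n:ℝ) * lam j z) else 0) :=
    RbAbs.of_abs
  -- injections
  have inj1 : Function.Injective (fun m : ℕ => (m:ℤ) + 2) := by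
    intro a b hab; simp only at hab; omega
  have inj2 : Function.Injective (fun m : ℕ => -((m:ℤ) + 2)) := by
    intro a b hab; simp only at hab; omega
  have claim3 : Summable (fun m : ℕ =>
      |aCoef g ((m : ℤ) + 2) i * ((n : ℝ) * lam ((m : ℤ) + 2) z)|) := by
    refine (RaAbs.comp_injective inj1).congr fun m => ?_
    simp only [Function.comp_apply]
    rw [if_pos (by omega)]
  have claim4 : Summable (fun m : ℕ =>
      |bCoef g ((m : ℤ) + 2) i * ((n : ℝ) * lam (-((m : ℤ) + 2)) z)|) := by
    refine (RbAbs.comp_injective inj2).congr fun m => ?_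
    simp only [Function.comp_apply]
    rw [if_pos (by omega), neg_neg]
  refine ⟨claim1, claim2, claim3, claim4, ?_⟩
  -- tsum over ℕ equals tsum over ℤ of Ra / Rb
  have tsumRa : (∑' m : ℕ, aCoef g ((m : ℤ) + 2) i * ((n : ℝ) * lam ((m : ℤ) + 2) z))
      = ∑' j : ℤ, (if 2 ≤ j then aCoef g j i * ((n:ℝ) * lam j z) else 0) := by
    rw [← Function.Injective.tsum_eq inj1 (f := fun j : ℤ =>
        if 2 ≤ j then aCoef g j i * ((n:ℝ) * lam j z) else 0) ?_]
    · exact tsum_congr fun m => by rw [if_pos (by omega)]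
    · intro x hx
      simp only [Function.mem_support, ne_eq] at hx
      by_cases h2 : 2 ≤ x
      · exact ⟨(x - 2).toNat, by simp; omega⟩
      · exact absurd (if_neg h2) hx
  have tsumRb : (∑' m : ℕ, bCoef g ((m : ℤ) + 2) i * ((n : ℝ) * lam (-((m : ℤ) + 2)) z))
      = ∑' j : ℤ, (if j ≤ -2 then bCoef g (-j) i * ((n:ℝ) * lam j z) else 0) := by
    rw [← Function.Injective.tsum_eq inj2 (f := fun j : ℤ =>
        if j ≤ -2 then bCoef g (-j) i * ((n:ℝ) * lam j z) else 0) ?_]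
    · exact tsum_congr fun m => by rw [if_pos (by omega), neg_neg]
    · intro x hx
      simp only [Function.mem_support, ne_eq] at hx
      by_cases h2 : x ≤ -2
      · exact ⟨(-x - 2).toNat, by simp; omega⟩
      · exact absurd (if_neg h2) hx
  -- pointwise decomposition
  have key : ∀ j : ℤ, (n:ℝ) * lam j z * (h (i + j) - h i)
      = (((n:ℝ)/2 * del g i) * ((j:ℝ)^2 * lam j z)
          + ((n:ℝ) * g i) * ((j:ℝ) * lam j z)
          - ((n:ℝ)/2 * del g i) * ((j:ℝ) * lam j z))
        + ((if 2 ≤ j then aCoef g j i * ((n:ℝ) * lam j z) else 0)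
          - (if j ≤ -2 then bCoef g (-j) i * ((n:ℝ) * lam j z) else 0)) := by
    intro j
    rw [← split_c g i (fun j => (n:ℝ) * lam j z) j, masterPt g h hg i j]
    ring
  have SA : Summable (fun j : ℤ => ((n:ℝ)/2 * del g i) * ((j:ℝ)^2 * lam j z)) :=
    S2.mul_left _
  have SB : Summable (fun j : ℤ => ((n:ℝ) * g i) * ((j:ℝ) * lam j z)) := S1.mul_left _
  have SC : Summable (fun j : ℤ => ((n:ℝ)/2 * del g i) * ((j:ℝ) * lam j z)) := S1.mul_left _
  calc (∑' j : ℤ, (n : ℝ) * lam j z * (h (i + j) - h i))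
      = ∑' j : ℤ, ((((n:ℝ)/2 * del g i) * ((j:ℝ)^2 * lam j z)
          + ((n:ℝ) * g i) * ((j:ℝ) * lam j z)
          - ((n:ℝ)/2 * del g i) * ((j:ℝ) * lam j z))
        + ((if 2 ≤ j then aCoef g j i * ((n:ℝ) * lam j z) else 0)
          - (if j ≤ -2 then bCoef g (-j) i * ((n:ℝ) * lam j z) else 0))) := tsum_congr key
    _ = ((∑' j : ℤ, ((n:ℝ)/2 * del g i) * ((j:ℝ)^2 * lam j z))
          + (∑' j : ℤ, ((n:ℝ) * g i) * ((j:ℝ) * lam j z))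
          - (∑' j : ℤ, ((n:ℝ)/2 * del g i) * ((j:ℝ) * lam j z)))
        + ((∑' j : ℤ, (if 2 ≤ j then aCoef g j i * ((n:ℝ) * lam j z) else 0))
          - (∑' j : ℤ, (if j ≤ -2 then bCoef g (-j) i * ((n:ℝ) * lam j z) else 0))) := by
        rw [Summable.tsum_add ((SA.add SB).sub SC) (SRa.sub SRb), Summable.tsum_sub (SA.add SB) SC,
          Summable.tsum_add SA SB, Summable.tsum_sub SRa SRb]
    _ = _ := by
        rw [tsum_mul_left, tsum_mul_left, tsum_mul_left, ← tsumRa, ← tsumRb]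
        have hgi : h (i + 1) - h i = g i := rfl
        rw [hgi]
        ring
end
end

section
/- For every μ > 0 and every r ∈ ℤ with r + ⌊μ⌋ ≥ 0, the translated Stein–Chen solution satisfies sup_{l ∈ ℤ} |ĝ_{μ,r}(l)| ≤ sup_{l ∈ ℤ} |ĝ_{μ,r}(l+1) − ĝ_{μ,r}(l)| ≤ 1/μ. -/
noncomputable section

/-- The Stein–Chen solution `g_{μ,s}` for the one-point set `{s}`: the unique
function with `g 0 = 0` and `μ·g(j+1) − j·g(j) = 1[j=s] − e^{−μ} μ^s / s!`. -/
def steinChen (μ : ℝ) (s : ℕ) : ℕ → ℝ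
  | 0 => 0
  | j + 1 => ((j : ℝ) * steinChen μ s j + (if j = s then 1 else 0)
      - Real.exp (-μ) * μ ^ s / (Nat.factorial s : ℝ)) / μ

/-- The translated Stein–Chen solution `ĝ_{μ,r}`. -/
def ghat (μ : ℝ) (r : ℤ) (l : ℤ) : ℝ :=
  if l < -⌊μ⌋ then 0 else steinChen μ (r + ⌊μ⌋).toNat (l + ⌊μ⌋).toNat

namespace SteinAux

open Finset

/-- Poisson weight. -/
def p (μ : ℝ) (k : ℕ) : ℝ := Real.exp (-μ) * μ ^ k / (Nat.factorial k : ℝ)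

/-- Poisson CDF at `j`. -/
def F (μ : ℝ) (j : ℕ) : ℝ := ∑ k ∈ Finset.range (j + 1), p μ k

/-- The constant in the closed form of the Stein solution. -/
def c (μ : ℝ) (s j : ℕ) : ℝ :=
  (Nat.factorial j : ℝ) * μ ^ s / ((Nat.factorial s : ℝ) * μ ^ (j + 1))

lemma fact_pos (n : ℕ) : (0 : ℝ) < (Nat.factorial n : ℝ) := by
  exact_mod_cast Nat.factorial_pos n

lemma p_pos {μ : ℝ} (hμ : 0 < μ) (k : ℕ) : 0 < p μ k := by
  have := fact_pos k
  unfold p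
  positivity

lemma F_pos {μ : ℝ} (hμ : 0 < μ) (j : ℕ) : 0 < F μ j :=
  Finset.sum_pos (fun k _ => p_pos hμ k) ⟨0, Finset.mem_range.mpr (Nat.succ_pos j)⟩

lemma c_pos {μ : ℝ} (hμ : 0 < μ) (s j : ℕ) : 0 < c μ s j := by
  have h1 := fact_pos s; have h2 := fact_pos j
  unfold c
  positivity

lemma c_succ {μ : ℝ} (hμ : 0 < μ) (s j : ℕ) :
    c μ s (j + 1) = ((j : ℝ) + 1) * c μ s j / μ := by
  unfold c
  have h1 := fact_pos s; have h2 := fact_pos j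
  rw [Nat.factorial_succ]
  push_cast
  field_simp
  ring

lemma c_mul_p {μ : ℝ} (hμ : 0 < μ) (s j : ℕ) :
    c μ s j * p μ j = p μ s / μ := by
  unfold c p
  have h1 := fact_pos s; have h2 := fact_pos j
  field_simp
  ring

lemma c_self {μ : ℝ} (hμ : 0 < μ) (s : ℕ) : c μ s s = 1 / μ := by
  unfold c
  have h1 := fact_pos s
  rw [pow_succ]
  field_simp

lemma c_pred {μ : ℝ} (hμ : 0 < μ) (t : ℕ) : c μ (t + 1) t = 1 / ((t : ℝ) + 1) := by
  unfold c
  have h1 := fact_pos t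
  have h2 : (0:ℝ) < μ ^ (t+1) := by positivity
  rw [Nat.factorial_succ]
  push_cast
  field_simp

/-- Closed form for the Stein–Chen solution. -/
lemma g_closed {μ : ℝ} (hμ : 0 < μ) (s j : ℕ) :
    steinChen μ s (j + 1) = c μ s j * ((if s ≤ j then 1 else 0) - F μ j) := by
  induction j with
  | zero =>
    simp only [steinChen, Nat.cast_zero, zero_mul, zero_add]
    rcases Nat.eq_zero_or_pos s with rfl | hs
    · simp only [if_pos rfl, Nat.le_refl, if_pos]
      unfold c F p
      simp [Nat.factorial]
      field_simp
    · rw [if_neg (by omega), if_neg (by omega)]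
      unfold c F p
      simp [Nat.factorial]
      have h1 := fact_pos s
      field_simp
  | succ j ih =>
    have hrec : steinChen μ s (j + 2)
        = (((j:ℝ) + 1) * steinChen μ s (j + 1) + (if j + 1 = s then 1 else 0)
          - Real.exp (-μ) * μ ^ s / (Nat.factorial s : ℝ)) / μ := by
      simp only [steinChen]
      push_cast
      ring_nf
    rw [hrec, ih]
    have hF : F μ (j + 1) = F μ j + p μ (j + 1) := Finset.sum_range_succ _ _
    have hχ : (if s ≤ j + 1 then (1:ℝ) else 0)
        = (if s ≤ j then (1:ℝ) else 0) + (if j + 1 = s then (1:ℝ) else 0) := by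
      rcases Nat.lt_trichotomy s (j + 1) with h | h | h
      · rw [if_pos (by omega), if_pos (by omega), if_neg (by omega)]; norm_num
      · rw [if_pos (by omega), if_neg (by omega), if_pos (by omega)]; norm_num
      · rw [if_neg (by omega), if_neg (by omega), if_neg (by omega)]; norm_num
    have hδ : c μ s (j + 1) * (if j + 1 = s then (1:ℝ) else 0)
        = (if j + 1 = s then (1:ℝ) else 0) / μ := by
      split_ifs with h
      · subst h; rw [c_self hμ, mul_one]
      · simp
    have hps : Real.exp (-μ) * μ ^ s / (Nat.factorial s : ℝ) = p μ s := rfl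
    have expand : c μ s (j + 1) * ((if s ≤ j + 1 then (1:ℝ) else 0) - F μ (j + 1))
        = ((j:ℝ) + 1) * c μ s j / μ * ((if s ≤ j then (1:ℝ) else 0) - F μ j)
          + c μ s (j + 1) * (if j + 1 = s then (1:ℝ) else 0)
          - c μ s (j + 1) * p μ (j + 1) := by
      rw [hF, hχ, ← c_succ hμ]
      ring
    rw [expand, hδ, c_mul_p hμ, hps]
    field_simp

lemma g_neg_side {μ : ℝ} (hμ : 0 < μ) {s j : ℕ} (h : j < s) :
    steinChen μ s (j + 1) = -(c μ s j * F μ j) := by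
  rw [g_closed hμ, if_neg (by omega)]
  ring

lemma g_pos_side {μ : ℝ} (hμ : 0 < μ) {s j : ℕ} (h : s ≤ j) :
    steinChen μ s (j + 1) = c μ s j * (1 - F μ j) := by
  rw [g_closed hμ, if_pos h]

lemma F_eq {μ : ℝ} (j : ℕ) :
    F μ j = Real.exp (-μ) * ∑ k ∈ Finset.range (j + 1), μ ^ k / (Nat.factorial k : ℝ) := by
  unfold F p
  rw [Finset.mul_sum]
  exact Finset.sum_congr rfl fun k _ => (mul_div_assoc _ _ _)

lemma F_le_one {μ : ℝ} (hμ : 0 < μ) (j : ℕ) : F μ j ≤ 1 := by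
  rw [F_eq]
  have h1 : ∑ k ∈ Finset.range (j + 1), μ ^ k / (Nat.factorial k : ℝ) ≤ Real.exp μ :=
    Real.sum_le_exp_of_nonneg hμ.le _
  have h2 : Real.exp (-μ) * Real.exp μ = 1 := by
    rw [← Real.exp_add]; simp
  calc Real.exp (-μ) * ∑ k ∈ Finset.range (j + 1), μ ^ k / (Nat.factorial k : ℝ)
      ≤ Real.exp (-μ) * Real.exp μ := by
        exact mul_le_mul_of_nonneg_left h1 (Real.exp_nonneg _)
    _ = 1 := h2

lemma summable_shift (μ : ℝ) (m : ℕ) :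
    Summable (fun i : ℕ => μ ^ (m + i) / (Nat.factorial (m + i) : ℝ)) :=
  ((summable_nat_add_iff m).mpr (Real.summable_pow_div_factorial μ)).congr
    (fun i => by rw [add_comm])

lemma one_sub_F {μ : ℝ} (hμ : 0 < μ) (j : ℕ) :
    1 - F μ j
      = Real.exp (-μ) * ∑' i : ℕ, μ ^ (j + 1 + i) / (Nat.factorial (j + 1 + i) : ℝ) := by
  have hexp : Real.exp μ = ∑' n : ℕ, μ ^ n / (Nat.factorial n : ℝ) := by
    rw [Real.exp_eq_exp_ℝ, NormedSpace.exp_eq_tsum_div]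
  have hsplit : (∑ k ∈ Finset.range (j + 1), μ ^ k / (Nat.factorial k : ℝ))
      + ∑' i : ℕ, μ ^ (i + (j + 1)) / (Nat.factorial (i + (j + 1)) : ℝ)
      = ∑' n : ℕ, μ ^ n / (Nat.factorial n : ℝ) :=
    (Real.summable_pow_div_factorial μ).sum_add_tsum_nat_add (j + 1)
  have h2 : Real.exp (-μ) * Real.exp μ = 1 := by rw [← Real.exp_add]; simp
  have htail : ∑' i : ℕ, μ ^ (i + (j + 1)) / (Nat.factorial (i + (j + 1)) : ℝ)
      = ∑' i : ℕ, μ ^ (j + 1 + i) / (Nat.factorial (j + 1 + i) : ℝ) :=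
    tsum_congr fun i => by rw [add_comm i (j + 1)]
  rw [F_eq, ← h2, hexp, ← hsplit, htail]
  ring

lemma T_nonneg {μ : ℝ} (hμ : 0 < μ) (j : ℕ) : 0 ≤ 1 - F μ j := by
  linarith [F_le_one hμ j]

lemma g_le_zero {μ : ℝ} (hμ : 0 < μ) {s j : ℕ} (h : j ≤ s) : steinChen μ s j ≤ 0 := by
  cases j with
  | zero => exact le_of_eq rfl
  | succ i =>
    rw [g_neg_side hμ (by omega : i < s)]
    have := (c_pos hμ s i).le
    have := (F_pos hμ (μ := μ) i).le
    nlinarith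

lemma g_nonneg' {μ : ℝ} (hμ : 0 < μ) {s j : ℕ} (h : s ≤ j) : 0 ≤ steinChen μ s (j + 1) := by
  rw [g_pos_side hμ h]
  exact mul_nonneg (c_pos hμ s j).le (T_nonneg hμ j)

/-- factorial comparison: for `k ≤ j`, `j! (k+d)! ≤ (j+d)! k!`. -/
lemma fact_mul_le {k j : ℕ} (d : ℕ) (h : k ≤ j) :
    Nat.factorial j * Nat.factorial (k + d) ≤ Nat.factorial (j + d) * Nat.factorial k := by
  induction d with
  | zero => simp [Nat.mul_comm]
  | succ d ih =>
    have h1 : k + (d + 1) ≤ j + (d + 1) := by omega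
    calc Nat.factorial j * Nat.factorial (k + (d + 1))
        = (Nat.factorial j * Nat.factorial (k + d)) * (k + d + 1) := by
          rw [show k + (d+1) = (k+d) + 1 by omega, Nat.factorial_succ]; ring
      _ ≤ (Nat.factorial (j + d) * Nat.factorial k) * (k + d + 1) :=
          Nat.mul_le_mul_right _ ih
      _ ≤ (Nat.factorial (j + d) * Nat.factorial k) * (j + d + 1) := by
          exact Nat.mul_le_mul_left _ (by omega)
      _ = Nat.factorial (j + (d + 1)) * Nat.factorial k := by
          rw [show j + (d+1) = (j+d) + 1 by omega, Nat.factorial_succ]; ring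

/-- `Afin j = ∑_{k ≤ j} j! μ^k / k!`. -/
def Afin (μ : ℝ) (j : ℕ) : ℝ :=
  ∑ k ∈ Finset.range (j + 1), (Nat.factorial j : ℝ) * μ ^ k / (Nat.factorial k : ℝ)

lemma Afin_nonneg {μ : ℝ} (hμ : 0 < μ) (j : ℕ) : 0 ≤ Afin μ j :=
  Finset.sum_nonneg fun k _ => by
    have := fact_pos j; have := fact_pos k; positivity

/-- key finite-sum inequality. -/
lemma key1 {μ : ℝ} (hμ : 0 < μ) (j d : ℕ) : Afin μ j * μ ^ d ≤ Afin μ (j + d) := by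
  have hL : Afin μ j * μ ^ d
      = ∑ k ∈ Finset.range (j + 1),
          (Nat.factorial j : ℝ) * μ ^ (d + k) / (Nat.factorial k : ℝ) := by
    rw [Afin, Finset.sum_mul]
    exact Finset.sum_congr rfl fun k _ => by rw [pow_add]; ring
  have hI : ∑ k ∈ Finset.Ico d (d + (j + 1)),
        (Nat.factorial j : ℝ) * μ ^ k / (Nat.factorial (k - d) : ℝ)
      = ∑ k ∈ Finset.range (j + 1),
          (Nat.factorial j : ℝ) * μ ^ (d + k) / (Nat.factorial k : ℝ) := by
    rw [Finset.sum_Ico_eq_sum_range]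
    refine Finset.sum_congr (by congr 1; omega) fun k _ => by
      rw [show d + k - d = k by omega]
  rw [hL, ← hI]
  have step1 : ∑ k ∈ Finset.Ico d (d + (j + 1)),
        (Nat.factorial j : ℝ) * μ ^ k / (Nat.factorial (k - d) : ℝ)
      ≤ ∑ k ∈ Finset.Ico d (d + (j + 1)),
          (Nat.factorial (j + d) : ℝ) * μ ^ k / (Nat.factorial k : ℝ) := by
    refine Finset.sum_le_sum fun k hk => ?_
    obtain ⟨hk1, hk2⟩ := Finset.mem_Ico.mp hk
    have hkd : k - d ≤ j := by omega
    have hfact : Nat.factorial j * Nat.factorial k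
        ≤ Nat.factorial (j + d) * Nat.factorial (k - d) := by
      have := fact_mul_le d hkd
      rwa [show k - d + d = k by omega] at this
    have h1 := fact_pos k; have h2 := fact_pos (k - d)
    have h3 : (0:ℝ) < μ ^ k := by positivity
    rw [div_le_div_iff₀ h2 h1]
    have hcast : (Nat.factorial j : ℝ) * (Nat.factorial k : ℝ)
        ≤ (Nat.factorial (j + d) : ℝ) * (Nat.factorial (k - d) : ℝ) := by
      exact_mod_cast hfact
    nlinarith
  refine step1.trans ?_
  refine Finset.sum_le_sum_of_subset_of_nonneg ?_ fun k _ _ => ?_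
  · intro k hk
    obtain ⟨_, hk2⟩ := Finset.mem_Ico.mp hk
    exact Finset.mem_range.mpr (by omega)
  · have := fact_pos (j + d); have := fact_pos k; positivity

/-- `c_j F_j` in terms of `Afin`. -/
lemma cF_eq {μ : ℝ} (hμ : 0 < μ) (s j : ℕ) :
    c μ s j * F μ j = p μ s * (Afin μ j / μ ^ (j + 1)) := by
  unfold c F p Afin
  rw [Finset.mul_sum, Finset.sum_div, Finset.mul_sum]
  refine Finset.sum_congr rfl fun k _ => ?_
  have h1 := fact_pos s; have h2 := fact_pos j; have h3 := fact_pos k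
  have h4 : (0:ℝ) < μ ^ (j + 1) := by positivity
  field_simp

/-- K1: the negative part is dominated at `s-1`. -/
lemma K1 {μ : ℝ} (hμ : 0 < μ) {s j t : ℕ} (h : j ≤ t) :
    c μ s j * F μ j ≤ c μ s t * F μ t := by
  obtain ⟨d, rfl⟩ := Nat.exists_eq_add_of_le h
  rw [cF_eq hμ, cF_eq hμ]
  refine mul_le_mul_of_nonneg_left ?_ (p_pos hμ s).le
  have h1 : (0:ℝ) < μ ^ (j + 1) := by positivity
  have h2 : (0:ℝ) < μ ^ (j + d + 1) := by positivity
  rw [div_le_div_iff₀ h1 h2]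
  have := key1 hμ j d
  calc Afin μ j * μ ^ (j + d + 1) = (Afin μ j * μ ^ d) * μ ^ (j + 1) := by
        rw [show j + d + 1 = d + (j + 1) by omega, pow_add]; ring
    _ ≤ Afin μ (j + d) * μ ^ (j + 1) :=
        mul_le_mul_of_nonneg_right this (by positivity)

/-- `B j` : tail sum of the exponential series after `j`. -/
def B (μ : ℝ) (j : ℕ) : ℝ := ∑' i : ℕ, μ ^ (j + 1 + i) / (Nat.factorial (j + 1 + i) : ℝ)

lemma B_summable (μ : ℝ) (j : ℕ) :
    Summable (fun i : ℕ => μ ^ (j + 1 + i) / (Nat.factorial (j + 1 + i) : ℝ)) :=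
  summable_shift μ (j + 1)

lemma B_nonneg {μ : ℝ} (hμ : 0 < μ) (j : ℕ) : 0 ≤ B μ j :=
  tsum_nonneg fun i => by have := fact_pos (j + 1 + i); positivity

/-- key tail inequality: `(s+d)! B(s+d) ≤ s! μ^d B s`. -/
lemma key2 {μ : ℝ} (hμ : 0 < μ) (s d : ℕ) :
    (Nat.factorial (s + d) : ℝ) * B μ (s + d) ≤ (Nat.factorial s : ℝ) * μ ^ d * B μ s := by
  unfold B
  rw [← tsum_mul_left, ← tsum_mul_left]
  refine Summable.tsum_le_tsum (fun i => ?_) ((B_summable μ (s + d)).mul_left _)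
    ((B_summable μ s).mul_left _)
  have hfact : Nat.factorial (s + d) * Nat.factorial (s + 1 + i)
      ≤ Nat.factorial (s + d + 1 + i) * Nat.factorial s := by
    have h := fact_mul_le (k := s) (j := s + 1 + i) d (by omega)
    calc Nat.factorial (s + d) * Nat.factorial (s + 1 + i)
        = Nat.factorial (s + 1 + i) * Nat.factorial (s + d) := Nat.mul_comm _ _
      _ ≤ Nat.factorial (s + 1 + i + d) * Nat.factorial s := by
          have := fact_mul_le (k := s + d) (j := s + 1 + i + d) 0 ?_
          · have h2 := fact_mul_le (k := s) (j := s + 1 + i) d (le_of_lt (by omega))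
            simpa [Nat.add_comm] using h2
          · omega
      _ = Nat.factorial (s + d + 1 + i) * Nat.factorial s := by
          congr 2
          omega
  have h1 := fact_pos (s + d + 1 + i)
  have h2 := fact_pos (s + 1 + i)
  have hμp : (0:ℝ) < μ ^ (s + d + 1 + i) := by positivity
  have h3 : (Nat.factorial (s + d) : ℝ) / (Nat.factorial (s + d + 1 + i) : ℝ)
      ≤ (Nat.factorial s : ℝ) / (Nat.factorial (s + 1 + i) : ℝ) := by
    rw [div_le_div_iff₀ h1 h2]
    exact_mod_cast hfact.trans_eq (Nat.mul_comm _ _)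
  calc (Nat.factorial (s + d) : ℝ) * (μ ^ (s + d + 1 + i) / (Nat.factorial (s + d + 1 + i) : ℝ))
      = μ ^ (s + d + 1 + i)
          * ((Nat.factorial (s + d) : ℝ) / (Nat.factorial (s + d + 1 + i) : ℝ)) := by ring
    _ ≤ μ ^ (s + d + 1 + i) * ((Nat.factorial s : ℝ) / (Nat.factorial (s + 1 + i) : ℝ)) :=
        mul_le_mul_of_nonneg_left h3 (by positivity)
    _ = (Nat.factorial s : ℝ) * μ ^ (s + d + 1 + i) / (Nat.factorial (s + 1 + i) : ℝ) := by ring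
    _ = (Nat.factorial s : ℝ) * μ ^ d * (μ ^ (s + 1 + i) / (Nat.factorial (s + 1 + i) : ℝ)) := by
        rw [show s + d + 1 + i = d + (s + 1 + i) by omega, pow_add]
        ring

/-- `c_j (1-F_j)` in terms of `B`. -/
lemma cT_eq {μ : ℝ} (hμ : 0 < μ) (s j : ℕ) :
    c μ s j * (1 - F μ j)
      = Real.exp (-μ) * μ ^ s / (Nat.factorial s : ℝ)
          * ((Nat.factorial j : ℝ) * B μ j / μ ^ (j + 1)) := by
  rw [one_sub_F hμ]
  unfold c B
  have h1 := fact_pos s; have h2 := fact_pos j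
  have h3 : (0:ℝ) < μ ^ (j + 1) := by positivity
  field_simp

/-- K2: the positive part is dominated at `s`. -/
lemma K2 {μ : ℝ} (hμ : 0 < μ) (s d : ℕ) :
    c μ s (s + d) * (1 - F μ (s + d)) ≤ c μ s s * (1 - F μ s) := by
  rw [cT_eq hμ, cT_eq hμ]
  have hc : (0:ℝ) ≤ Real.exp (-μ) * μ ^ s / (Nat.factorial s : ℝ) := by
    have := fact_pos s; positivity
  refine mul_le_mul_of_nonneg_left ?_ hc
  have h1 : (0:ℝ) < μ ^ (s + d + 1) := by positivity
  have h2 : (0:ℝ) < μ ^ (s + 1) := by positivity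
  rw [div_le_div_iff₀ h1 h2]
  have := key2 hμ s d
  calc (Nat.factorial (s + d) : ℝ) * B μ (s + d) * μ ^ (s + 1)
      ≤ ((Nat.factorial s : ℝ) * μ ^ d * B μ s) * μ ^ (s + 1) :=
        mul_le_mul_of_nonneg_right this (by positivity)
    _ = (Nat.factorial s : ℝ) * B μ s * μ ^ (s + d + 1) := by
        rw [show s + d + 1 = (s + 1) + d by omega, pow_add]
        ring

/-- K3: `μ F_t ≤ (t+1) F_{t+1}`. -/
lemma K3 {μ : ℝ} (hμ : 0 < μ) (t : ℕ) :
    μ * F μ t ≤ ((t : ℝ) + 1) * F μ (t + 1) := by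
  have hp : ∀ k : ℕ, μ * p μ k = ((k : ℝ) + 1) * p μ (k + 1) := by
    intro k
    unfold p
    have h1 := fact_pos k
    have h2 := fact_pos (k + 1)
    rw [Nat.factorial_succ]
    push_cast
    field_simp
    ring
  have hstep : μ * F μ t = ∑ k ∈ Finset.range (t + 1), ((k : ℝ) + 1) * p μ (k + 1) := by
    rw [F, Finset.mul_sum]
    exact Finset.sum_congr rfl fun k _ => hp k
  have hb : ∑ k ∈ Finset.range (t + 1), ((k : ℝ) + 1) * p μ (k + 1)
      ≤ ∑ k ∈ Finset.range (t + 1), ((t : ℝ) + 1) * p μ (k + 1) := by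
    refine Finset.sum_le_sum fun k hk => ?_
    have hk' := Finset.mem_range.mp hk
    have : ((k : ℝ) + 1) ≤ ((t : ℝ) + 1) := by exact_mod_cast Nat.succ_le_succ (by omega)
    exact mul_le_mul_of_nonneg_right this (p_pos hμ (k + 1)).le
  have hsum : ∑ k ∈ Finset.range (t + 1), p μ (k + 1) ≤ F μ (t + 1) := by
    rw [F, Finset.sum_range_succ' (fun k => p μ k) (t + 1)]
    have := (p_pos hμ 0).le
    nlinarith [Finset.sum_nonneg (fun k (_ : k ∈ Finset.range (t + 1)) => (p_pos hμ (k + 1)).le)]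
  calc μ * F μ t = ∑ k ∈ Finset.range (t + 1), ((k : ℝ) + 1) * p μ (k + 1) := hstep
    _ ≤ ∑ k ∈ Finset.range (t + 1), ((t : ℝ) + 1) * p μ (k + 1) := hb
    _ = ((t : ℝ) + 1) * ∑ k ∈ Finset.range (t + 1), p μ (k + 1) := by rw [Finset.mul_sum]
    _ ≤ ((t : ℝ) + 1) * F μ (t + 1) := by
        refine mul_le_mul_of_nonneg_left hsum ?_
        positivity

/-- Monotone domination on the negative side: `g s ≤ g j` for `j ≤ s`. -/
lemma g_ge_gs {μ : ℝ} (hμ : 0 < μ) {s j : ℕ} (h : j ≤ s) :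
    steinChen μ s s ≤ steinChen μ s j := by
  cases s with
  | zero => interval_cases j; exact le_refl _
  | succ t =>
    have hgs : steinChen μ (t + 1) (t + 1) = -(c μ (t + 1) t * F μ t) :=
      g_neg_side hμ (by omega)
    cases j with
    | zero =>
      rw [hgs]
      show -(c μ (t+1) t * F μ t) ≤ steinChen μ (t+1) 0
      have := (c_pos hμ (t + 1) t).le
      have := (F_pos hμ (μ := μ) t).le
      show -(c μ (t+1) t * F μ t) ≤ 0
      nlinarith
    | succ i =>
      have hi : i ≤ t := by omega
      rw [hgs, g_neg_side hμ (show i < t + 1 by omega)]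
      have := K1 hμ (s := t + 1) hi
      linarith

/-- Monotone domination on the positive side: `g j ≤ g (s+1)` for `s < j`. -/
lemma g_le_gs1 {μ : ℝ} (hμ : 0 < μ) {s j : ℕ} (h : s ≤ j) :
    steinChen μ s (j + 1) ≤ steinChen μ s (s + 1) := by
  obtain ⟨d, rfl⟩ := Nat.exists_eq_add_of_le h
  rw [g_pos_side hμ (by omega : s ≤ s + d), g_pos_side hμ (le_refl s)]
  exact K2 hμ s d

/-- Bound on the peak difference: `g(s+1) - g(s) ≤ 1/μ`. -/
lemma M_le_inv {μ : ℝ} (hμ : 0 < μ) (s : ℕ) :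
    steinChen μ s (s + 1) - steinChen μ s s ≤ 1 / μ := by
  cases s with
  | zero =>
    have h1 : steinChen μ 0 1 = c μ 0 0 * (1 - F μ 0) := g_pos_side hμ (le_refl 0)
    have h2 : steinChen μ 0 0 = 0 := rfl
    rw [h1, h2, c_self hμ]
    have h3 := F_pos hμ (μ := μ) 0
    have h4 : (0:ℝ) < 1 / μ := by positivity
    nlinarith
  | succ t =>
    have h1 : steinChen μ (t+1) (t + 2) = c μ (t+1) (t+1) * (1 - F μ (t+1)) :=
      g_pos_side hμ (le_refl (t+1))
    have h2 : steinChen μ (t+1) (t+1) = -(c μ (t+1) t * F μ t) := g_neg_side hμ (by omega)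
    rw [h1, h2, c_self hμ, c_pred hμ]
    have hK3 := K3 hμ (μ := μ) t
    have ht1 : (0:ℝ) < (t : ℝ) + 1 := by positivity
    have key : F μ t / ((t:ℝ) + 1) ≤ F μ (t + 1) / μ := by
      rw [div_le_div_iff₀ ht1 hμ]
      nlinarith
    have hF1 : 0 < F μ (t + 1) := F_pos hμ _
    have expand : 1 / μ * (1 - F μ (t+1)) - -(1 / ((t:ℝ)+1) * F μ t)
        = 1/μ - F μ (t+1)/μ + F μ t/((t:ℝ)+1) := by
      field_simp
      ring
    rw [expand]
    linarith

/-- `|g j| ≤ g(s+1) - g(s)` for all `j`. -/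
lemma abs_g_le_M {μ : ℝ} (hμ : 0 < μ) (s j : ℕ) :
    |steinChen μ s j| ≤ steinChen μ s (s + 1) - steinChen μ s s := by
  have hgs1 : 0 ≤ steinChen μ s (s + 1) := g_nonneg' hμ (le_refl s)
  have hgs : steinChen μ s s ≤ 0 := g_le_zero hμ (le_refl s)
  rcases le_or_gt j s with h | h
  · rw [abs_of_nonpos (g_le_zero hμ h)]
    have := g_ge_gs hμ h
    linarith
  · obtain ⟨k, rfl⟩ : ∃ k, j = k + 1 := ⟨j - 1, by omega⟩
    have hk : s ≤ k := by omega
    rw [abs_of_nonneg (g_nonneg' hμ hk)]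
    have := g_le_gs1 hμ hk
    linarith

/-- `|g(j+1) - g(j)| ≤ g(s+1) - g(s)` for all `j`. -/
lemma abs_dg_le_M {μ : ℝ} (hμ : 0 < μ) (s j : ℕ) :
    |steinChen μ s (j + 1) - steinChen μ s j| ≤ steinChen μ s (s + 1) - steinChen μ s s := by
  have hgs1 : 0 ≤ steinChen μ s (s + 1) := g_nonneg' hμ (le_refl s)
  have hgs : steinChen μ s s ≤ 0 := g_le_zero hμ (le_refl s)
  rcases lt_trichotomy j s with h | rfl | h
  · have h1 := g_ge_gs hμ (le_of_lt h)
    have h2 := g_ge_gs hμ (show j + 1 ≤ s by omega)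
    have h3 := g_le_zero hμ (le_of_lt h)
    have h4 := g_le_zero hμ (show j + 1 ≤ s by omega)
    rw [abs_le]
    constructor <;> linarith
  · rw [abs_of_nonneg (by linarith)]
  · obtain ⟨k, rfl⟩ : ∃ k, j = k + 1 := ⟨j - 1, by omega⟩
    have hk : s ≤ k := by omega
    have h1 := g_le_gs1 hμ hk
    have h2 := g_le_gs1 hμ (show s ≤ k + 1 by omega)
    have h3 := g_nonneg' hμ hk
    have h4 := g_nonneg' hμ (show s ≤ k + 1 by omega)
    rw [abs_le]
    constructor <;> linarith

lemma abs_dg_le_inv {μ : ℝ} (hμ : 0 < μ) (s j : ℕ) :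
    |steinChen μ s (j + 1) - steinChen μ s j| ≤ 1 / μ :=
  (abs_dg_le_M hμ s j).trans (M_le_inv hμ s)

end SteinAux

/-- `sup_l |ĝ_{μ,r}(l)| ≤ sup_l |Δĝ_{μ,r}(l)| ≤ 1/μ`. -/
theorem ghat_sup_bounds (μ : ℝ) (hμ : 0 < μ) (r : ℤ) (hr : 0 ≤ r + ⌊μ⌋) :
    (⨆ l : ℤ, |ghat μ r l|) ≤ (⨆ l : ℤ, |ghat μ r (l + 1) - ghat μ r l|) ∧
    (⨆ l : ℤ, |ghat μ r (l + 1) - ghat μ r l|) ≤ 1 / μ := by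
  set m : ℤ := ⌊μ⌋ with hm
  set s : ℕ := (r + m).toNat with hs
  have hinv : (0:ℝ) ≤ 1 / μ := by positivity
  -- pointwise bound on differences
  have hbound : ∀ l : ℤ, |ghat μ r (l + 1) - ghat μ r l| ≤ 1 / μ := by
    intro l
    by_cases h1 : l + 1 < -m
    · have h2 : l < -m := by omega
      simp only [ghat, if_pos h1, if_pos h2, sub_zero, abs_zero, ← hm]
      · simpa [ghat, ← hm, h1, h2] using hinv
    · by_cases h2 : l < -m
      · have h0 : l + 1 + m = 0 := by omega
        have : ghat μ r (l + 1) = 0 := by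
          simp only [ghat, ← hm, if_neg h1, h0]
          rfl
        have hz : ghat μ r l = 0 := by simp [ghat, ← hm, h2]
        rw [this, hz]
        simpa using hinv
      · have h1' : ¬ (l + 1 < -m) := h1
        have hnat : (l + 1 + m).toNat = (l + m).toNat + 1 := by omega
        have e1 : ghat μ r (l + 1) = steinChen μ s ((l + m).toNat + 1) := by
          simp only [ghat, ← hm, if_neg h1', hnat, ← hs]
        have e2 : ghat μ r l = steinChen μ s ((l + m).toNat) := by
          simp only [ghat, ← hm, if_neg h2, ← hs]
        rw [e1, e2]
        exact SteinAux.abs_dg_le_inv hμ s _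
  have hbdd : BddAbove (Set.range fun l : ℤ => |ghat μ r (l + 1) - ghat μ r l|) := by
    refine ⟨1 / μ, ?_⟩
    rintro x ⟨l, rfl⟩
    exact hbound l
  constructor
  · refine ciSup_le fun l => ?_
    -- identify the peak difference
    have hrm : ¬ (r < -m) := by omega
    have hr1 : ¬ (r + 1 < -m) := by omega
    have hsr : (r + m).toNat = s := rfl
    have hsr1 : (r + 1 + m).toNat = s + 1 := by omega
    have epeak1 : ghat μ r (r + 1) = steinChen μ s (s + 1) := by
      simp only [ghat, ← hm, if_neg hr1, hsr1, hsr]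
    have epeak0 : ghat μ r r = steinChen μ s s := by
      simp only [ghat, ← hm, if_neg hrm, hsr]
    have hM_le : steinChen μ s (s + 1) - steinChen μ s s
        ≤ ⨆ l : ℤ, |ghat μ r (l + 1) - ghat μ r l| := by
      have : steinChen μ s (s + 1) - steinChen μ s s = |ghat μ r (r + 1) - ghat μ r r| := by
        rw [epeak1, epeak0, abs_of_nonneg]
        have h1 : 0 ≤ steinChen μ s (s + 1) := SteinAux.g_nonneg' hμ (le_refl s)
        have h2 : steinChen μ s s ≤ 0 := SteinAux.g_le_zero hμ (le_refl s)
        linarith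
      rw [this]
      exact le_ciSup hbdd r
    by_cases h : l < -m
    · have hz : ghat μ r l = 0 := by simp [ghat, ← hm, h]
      rw [hz, abs_zero]
      have h1 : 0 ≤ steinChen μ s (s + 1) := SteinAux.g_nonneg' hμ (le_refl s)
      have h2 : steinChen μ s s ≤ 0 := SteinAux.g_le_zero hμ (le_refl s)
      linarith
    · have e : ghat μ r l = steinChen μ s ((l + m).toNat) := by
        simp only [ghat, ← hm, if_neg h, ← hs]
      rw [e]
      exact (SteinAux.abs_g_le_M hμ s _).trans hM_le
  · exact ciSup_le hbound

end
end

section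
/- For every μ > 0 and every r ∈ ℤ with r + ⌊μ⌋ ≥ 0, there exists a function h : ℤ → [0,∞) with Σ_{l ∈ ℤ} h(l) ≤ 3 such that for all l ∈ ℤ, |(l − ⟨μ⟩)·ĝ_{μ,r}(l)| ≤ h(l) + Po(μ){r + ⌊μ⌋}. -/
noncomputable section

namespace SteinBound
open Finset Real

def p (μ : ℝ) (k : ℕ) : ℝ := μ ^ k / (Nat.factorial k : ℝ)
def pois (μ : ℝ) (s : ℕ) : ℝ := Real.exp (-μ) * μ ^ s / (Nat.factorial s : ℝ)
def S (μ : ℝ) (n : ℕ) : ℝ := ∑ k ∈ Finset.range n, p μ k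
def E (μ : ℝ) (n : ℕ) : ℝ := Real.exp μ - S μ n

variable {μ : ℝ}

lemma p_nonneg (hμ : 0 ≤ μ) (k : ℕ) : 0 ≤ p μ k := by
  unfold p; positivity

lemma p_pos (hμ : 0 < μ) (k : ℕ) : 0 < p μ k := by
  unfold p; positivity

lemma pois_pos (hμ : 0 < μ) (s : ℕ) : 0 < pois μ s := by
  unfold pois; positivity

lemma summable_p : Summable (p μ) := by
  exact Real.summable_pow_div_factorial μ

lemma hasSum_p : HasSum (p μ) (Real.exp μ) := by
  rw [Real.exp_eq_exp_ℝ]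
  exact NormedSpace.expSeries_div_hasSum_exp μ

lemma S_nonneg (hμ : 0 ≤ μ) (n : ℕ) : 0 ≤ S μ n :=
  Finset.sum_nonneg fun k _ => p_nonneg hμ k

lemma S_le_exp (hμ : 0 ≤ μ) (n : ℕ) : S μ n ≤ Real.exp μ := by
  simpa [S, p] using Real.sum_le_exp_of_nonneg hμ n

lemma E_nonneg (hμ : 0 ≤ μ) (n : ℕ) : 0 ≤ E μ n := by
  simpa [E] using S_le_exp hμ n

lemma E_eq_tsum (n : ℕ) : E μ n = ∑' k, p μ (k + n) := by
  have h := Summable.sum_add_tsum_nat_add (f := p μ) n summable_p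
  rw [hasSum_p.tsum_eq] at h
  rw [E, S]; linarith

lemma mul_p (k : ℕ) : μ * p μ k = ((k : ℝ) + 1) * p μ (k + 1) := by
  have h1 : (Nat.factorial k : ℝ) ≠ 0 := Nat.cast_ne_zero.mpr (Nat.factorial_ne_zero k)
  have h2 : (Nat.factorial (k+1) : ℝ) ≠ 0 := Nat.cast_ne_zero.mpr (Nat.factorial_ne_zero _)
  rw [p, p, Nat.factorial_succ]
  push_cast
  field_simp
  ring

lemma pois_mul_exp (s : ℕ) : pois μ s * Real.exp μ = p μ s := by
  rw [pois, p, Real.exp_neg]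
  field_simp

lemma fact_mul_p (n : ℕ) : (Nat.factorial n : ℝ) * p μ n = μ ^ n := by
  rw [p]
  field_simp

lemma stein_eq (hμ : 0 < μ) (s j : ℕ) :
    μ * steinChen μ s (j+1)
      = (j : ℝ) * steinChen μ s j + (if j = s then 1 else 0) - pois μ s := by
  have h : steinChen μ s (j+1) = ((j : ℝ) * steinChen μ s j + (if j = s then 1 else 0)
      - Real.exp (-μ) * μ ^ s / (Nat.factorial s : ℝ)) / μ := rfl
  rw [h, pois]
  field_simp

lemma closed_form (hμ : 0 < μ) (s : ℕ) (j : ℕ) :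
    μ ^ (j+1) * steinChen μ s (j+1)
      = (Nat.factorial j : ℝ) * ((if s ≤ j then p μ s else 0) - pois μ s * S μ (j+1)) := by
  induction j with
  | zero =>
      have h := stein_eq hμ s 0
      have h0 : steinChen μ s 0 = 0 := rfl
      rw [h0] at h
      have hS1 : S μ 1 = 1 := by simp [S, p]
      have hpow : μ ^ (0+1) = μ := by ring
      rw [hpow, h, hS1]
      rcases Nat.eq_zero_or_pos s with hs | hs
      · subst hs
        simp [p]
      · have h1 : ¬ (0 = s) := by omega
        have h2 : ¬ (s ≤ 0) := by omega
        simp [h1, h2]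
  | succ j ih =>
      have hfac : (Nat.factorial (j+1) : ℝ) = ((j:ℝ)+1) * (Nat.factorial j : ℝ) := by
        rw [Nat.factorial_succ]; push_cast; ring
      have hfp : ((j:ℝ)+1) * (Nat.factorial j : ℝ) * p μ (j+1) = μ ^ (j+1) := by
        rw [← hfac]; exact fact_mul_p (j+1)
      have hS : S μ (j+2) = S μ (j+1) + p μ (j+1) := by
        rw [S, S, Finset.sum_range_succ]
      have key : μ ^ (j+2) * steinChen μ s (j+2)
          = ((j:ℝ)+1) * (μ ^ (j+1) * steinChen μ s (j+1))
            + μ ^ (j+1) * ((if j+1 = s then 1 else 0) - pois μ s) := by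
        have h := stein_eq hμ s (j+1)
        have : μ ^ (j+2) * steinChen μ s (j+2) = μ ^ (j+1) * (μ * steinChen μ s (j+2)) := by
          ring
        rw [this, h]
        push_cast
        ring
      rw [key, ih, hS, hfac]
      rcases lt_trichotomy s (j+1) with h | h | h
      · have h1 : s ≤ j := by omega
        have h2 : s ≤ j + 1 := by omega
        have h3 : ¬ (j+1 = s) := by omega
        simp only [if_pos h1, if_pos h2, if_neg h3]
        linear_combination (pois μ s) * hfp
      · have h1 : ¬ (s ≤ j) := by omega
        have h2 : s ≤ j + 1 := by omega
        have h3 : (j+1 = s) := by omega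
        simp only [if_neg h1, if_pos h2, if_pos h3]
        have hps : p μ s = p μ (j+1) := by rw [h3]
        rw [hps]
        linear_combination (pois μ s - 1) * hfp
      · have h1 : ¬ (s ≤ j) := by omega
        have h2 : ¬ (s ≤ j + 1) := by omega
        have h3 : ¬ (j+1 = s) := by omega
        simp only [if_neg h1, if_neg h2, if_neg h3]
        linear_combination (pois μ s) * hfp

lemma G_eq_low (hμ : 0 < μ) {s j : ℕ} (hj : ¬ (s ≤ j)) :
    steinChen μ s (j+1)
      = -((Nat.factorial j : ℝ) * pois μ s * S μ (j+1)) / μ ^ (j+1) := by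
  have h := closed_form hμ s j
  rw [if_neg hj] at h
  have hp : (0:ℝ) < μ ^ (j+1) := pow_pos hμ _
  field_simp
  linarith [h]

lemma G_eq_high (hμ : 0 < μ) {s j : ℕ} (hj : s ≤ j) :
    steinChen μ s (j+1)
      = ((Nat.factorial j : ℝ) * pois μ s * E μ (j+1)) / μ ^ (j+1) := by
  have h := closed_form hμ s j
  rw [if_pos hj] at h
  have hps : p μ s = pois μ s * Real.exp μ := (pois_mul_exp s).symm
  rw [hps] at h
  have hp : (0:ℝ) < μ ^ (j+1) := pow_pos hμ _
  rw [E]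
  field_simp
  linear_combination h

lemma G_nonpos (hμ : 0 < μ) {s j : ℕ} (h : j ≤ s) : steinChen μ s j ≤ 0 := by
  cases j with
  | zero => simp [steinChen]
  | succ i =>
      have hi : ¬ (s ≤ i) := by omega
      rw [G_eq_low hμ hi]
      have h1 : 0 ≤ (Nat.factorial i : ℝ) * pois μ s * S μ (i+1) := by
        have := (pois_pos hμ s).le
        have := S_nonneg hμ.le (i+1)
        positivity
      have h2 : (0:ℝ) < μ ^ (i+1) := pow_pos hμ _
      exact div_nonpos_iff.mpr (Or.inr ⟨by linarith, h2.le⟩)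

lemma G_nonneg (hμ : 0 < μ) {s j : ℕ} (h : s < j) : 0 ≤ steinChen μ s j := by
  cases j with
  | zero => omega
  | succ i =>
      have hi : s ≤ i := by omega
      rw [G_eq_high hμ hi]
      have h1 : 0 ≤ (Nat.factorial i : ℝ) * pois μ s * E μ (i+1) := by
        have := (pois_pos hμ s).le
        have := E_nonneg hμ.le (i+1)
        positivity
      positivity

lemma mu_S_le (hμ : 0 < μ) (n : ℕ) : μ * S μ n ≤ (n:ℝ) * S μ (n+1) := by
  have h1 : μ * S μ n = ∑ k ∈ Finset.range (n+1), (k:ℝ) * p μ k := by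
    rw [S, Finset.mul_sum, Finset.sum_range_succ' (fun k => (k:ℝ) * p μ k) n]
    simp only [Nat.cast_zero, zero_mul, add_zero]
    refine Finset.sum_congr rfl fun k _ => ?_
    rw [mul_p]
    push_cast
    ring
  rw [h1, S, Finset.mul_sum]
  refine Finset.sum_le_sum fun k hk => ?_
  have hk' : (k:ℝ) ≤ (n:ℝ) := by
    have := Finset.mem_range.mp hk
    exact_mod_cast Nat.lt_succ_iff.mp this
  exact mul_le_mul_of_nonneg_right hk' (p_nonneg hμ.le k)

lemma mu_E_ge (hμ : 0 < μ) (n : ℕ) : ((n:ℝ)+1) * E μ (n+1) ≤ μ * E μ n := by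
  rw [E_eq_tsum, E_eq_tsum]
  have hs0 : Summable (fun k => p μ (k + n)) := (summable_nat_add_iff n).mpr summable_p
  have hs1 : Summable (fun k => p μ (k + (n+1))) := (summable_nat_add_iff (n+1)).mpr summable_p
  have hterm : ∀ k : ℕ, μ * p μ (k + n) = ((k:ℝ) + n + 1) * p μ (k + (n+1)) := by
    intro k
    have := mul_p (μ := μ) (k + n)
    rw [this]
    push_cast
    ring_nf
  have hR : μ * ∑' k, p μ (k + n) = ∑' k : ℕ, ((k:ℝ) + n + 1) * p μ (k + (n+1)) := by
    rw [← tsum_mul_left]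
    exact tsum_congr hterm
  have hL : ((n:ℝ)+1) * ∑' k, p μ (k + (n+1)) = ∑' k, ((n:ℝ) + 1) * p μ (k + (n+1)) := by
    rw [← tsum_mul_left]
  rw [hL, hR]
  refine Summable.tsum_le_tsum (fun k => ?_) (hs1.mul_left _) ?_
  · have hp := p_nonneg hμ.le (k + (n+1))
    have : ((n:ℝ) + 1) ≤ ((k:ℝ) + n + 1) := by
      have : (0:ℝ) ≤ (k:ℝ) := Nat.cast_nonneg k
      linarith
    exact mul_le_mul_of_nonneg_right this hp
  · refine Summable.congr (hs0.mul_left μ) fun k => ?_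
    exact hterm k

lemma G_antitone_low (hμ : 0 < μ) {s j : ℕ} (hj : j < s) :
    steinChen μ s (j+1) ≤ steinChen μ s j := by
  cases j with
  | zero =>
      have h := stein_eq hμ s 0
      have h0 : steinChen μ s 0 = 0 := rfl
      have h1 : ¬ ((0:ℕ) = s) := by omega
      rw [h0, if_neg h1] at h
      have : steinChen μ s 1 = -pois μ s / μ := by
        field_simp at h ⊢
        linarith
      rw [this, h0]
      have := (pois_pos hμ s).le
      have : -pois μ s / μ ≤ 0 := div_nonpos_iff.mpr (Or.inr ⟨by linarith, hμ.le⟩)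
      linarith
  | succ i =>
      have hi : ¬ (s ≤ i) := by omega
      have hi1 : ¬ (s ≤ i+1) := by omega
      rw [G_eq_low hμ hi, G_eq_low hμ hi1]
      rw [neg_div, neg_div, neg_le_neg_iff]
      have hp1 : (0:ℝ) < μ ^ (i+1) := pow_pos hμ _
      have hp2 : (0:ℝ) < μ ^ (i+1+1) := pow_pos hμ _
      rw [div_le_div_iff₀ hp1 hp2]
      have hkey : μ * S μ (i+1) ≤ ((i:ℝ)+1) * S μ (i+2) := by
        have := mu_S_le hμ (i+1)
        push_cast at this
        linarith
      have hfac : (Nat.factorial (i+1) : ℝ) = ((i:ℝ)+1) * (Nat.factorial i : ℝ) := by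
        rw [Nat.factorial_succ]; push_cast; ring
    -- goal : i! * pois * S(i+1) * μ^(i+2) ≤ (i+1)! * pois * S(i+2) * μ^(i+1)
      have hπ := (pois_pos hμ s).le
      have hfi : (0:ℝ) ≤ (Nat.factorial i : ℝ) := Nat.cast_nonneg _
      have h2 : (Nat.factorial i : ℝ) * pois μ s * (μ * S μ (i+1))
          ≤ (Nat.factorial i : ℝ) * pois μ s * (((i:ℝ)+1) * S μ (i+2)) := by
        apply mul_le_mul_of_nonneg_left hkey
        positivity
      calc (Nat.factorial i : ℝ) * pois μ s * S μ (i+1) * μ ^ (i+1+1)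
          = ((Nat.factorial i : ℝ) * pois μ s * (μ * S μ (i+1))) * μ ^ (i+1) := by ring
        _ ≤ ((Nat.factorial i : ℝ) * pois μ s * (((i:ℝ)+1) * S μ (i+2))) * μ ^ (i+1) := by
            apply mul_le_mul_of_nonneg_right h2 hp1.le
        _ = (Nat.factorial (i+1) : ℝ) * pois μ s * S μ (i+1+1) * μ ^ (i+1) := by
            rw [hfac]
            push_cast
            ring

lemma G_antitone_high (hμ : 0 < μ) {s j : ℕ} (hj : s < j) :
    steinChen μ s (j+1) ≤ steinChen μ s j := by
  cases j with
  | zero => omega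
  | succ i =>
      have hi : s ≤ i := by omega
      have hi1 : s ≤ i+1 := by omega
      rw [G_eq_high hμ hi, G_eq_high hμ hi1]
      have hp1 : (0:ℝ) < μ ^ (i+1) := pow_pos hμ _
      have hp2 : (0:ℝ) < μ ^ (i+1+1) := pow_pos hμ _
      rw [div_le_div_iff₀ hp2 hp1]
      have hE2 : 0 ≤ E μ (i+2) := E_nonneg hμ.le _
      have hkey : ((i:ℝ)+1) * E μ (i+2) ≤ μ * E μ (i+1) := by
        have h1 := mu_E_ge hμ (i+1)
        push_cast at h1
        have h2 : ((i:ℝ)+1) * E μ (i+2) ≤ ((i:ℝ)+1+1) * E μ (i+2) := by nlinarith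
        linarith
      have hfac : (Nat.factorial (i+1) : ℝ) = ((i:ℝ)+1) * (Nat.factorial i : ℝ) := by
        rw [Nat.factorial_succ]; push_cast; ring
      have hπ := (pois_pos hμ s).le
      have hfi : (0:ℝ) ≤ (Nat.factorial i : ℝ) := Nat.cast_nonneg _
      have h2 : (Nat.factorial i : ℝ) * pois μ s * (((i:ℝ)+1) * E μ (i+2))
          ≤ (Nat.factorial i : ℝ) * pois μ s * (μ * E μ (i+1)) := by
        apply mul_le_mul_of_nonneg_left hkey
        positivity
      calc (Nat.factorial (i+1) : ℝ) * pois μ s * E μ (i+1+1) * μ ^ (i+1)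
          = ((Nat.factorial i : ℝ) * pois μ s * (((i:ℝ)+1) * E μ (i+2))) * μ ^ (i+1) := by
            rw [hfac]; push_cast; ring
        _ ≤ ((Nat.factorial i : ℝ) * pois μ s * (μ * E μ (i+1))) * μ ^ (i+1) := by
            apply mul_le_mul_of_nonneg_right h2 hp1.le
        _ = (Nat.factorial i : ℝ) * pois μ s * E μ (i+1) * μ ^ (i+1+1) := by ring

lemma G_antitone_of_le (hμ : 0 < μ) {s : ℕ} :
    ∀ a b : ℕ, a ≤ b → b ≤ s → steinChen μ s b ≤ steinChen μ s a := by
  intro a b hab hbs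
  induction b, hab using Nat.le_induction with
  | base => exact le_refl _
  | succ b hab ih => exact (G_antitone_low hμ (by omega)).trans (ih (by omega))

lemma pois_le_one (hμ : 0 < μ) (s : ℕ) : pois μ s ≤ 1 := by
  have h1 : p μ s ≤ S μ (s+1) := by
    rw [S]
    exact Finset.single_le_sum (fun k _ => p_nonneg hμ.le k) (Finset.self_mem_range_succ s)
  have h2 : S μ (s+1) ≤ Real.exp μ := S_le_exp hμ.le (s+1)
  have h3 : pois μ s * Real.exp μ ≤ Real.exp μ := by
    rw [pois_mul_exp]; linarith
  have h4 : (0:ℝ) < Real.exp μ := Real.exp_pos μ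
  nlinarith

lemma shift_sum (hμ : 0 < μ) (m : ℕ) : (μ - (m:ℝ)) * S μ m ≤ (m:ℝ) * p μ m := by
  have h1 : (μ - (m:ℝ)) * S μ m = ∑ k ∈ Finset.range m, (μ - (m:ℝ)) * p μ k := by
    rw [S, Finset.mul_sum]
  have h2 : ∑ k ∈ Finset.range m, (μ - (m:ℝ)) * p μ k
      ≤ ∑ k ∈ Finset.range m, (((k:ℝ)+1) * p μ (k+1) - (k:ℝ) * p μ k) := by
    refine Finset.sum_le_sum fun k hk => ?_
    have hkm : (k:ℝ) ≤ (m:ℝ) := by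
      have := Finset.mem_range.mp hk
      exact_mod_cast this.le
    have := p_nonneg hμ.le k
    have hmp := mul_p (μ := μ) k
    nlinarith
  have h3 : ∑ k ∈ Finset.range m, (((k:ℝ)+1) * p μ (k+1) - (k:ℝ) * p μ k)
      = (m:ℝ) * p μ m := by
    have := Finset.sum_range_sub (f := fun k => (k:ℝ) * p μ k) m
    simp only [Nat.cast_zero, zero_mul, sub_zero] at this
    rw [← this]
    refine Finset.sum_congr rfl fun k _ => ?_
    push_cast
    ring
  linarith [h1, h2, h3]

lemma delta_nonneg (hμ : 0 < μ) (s : ℕ) :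
    0 ≤ μ * (steinChen μ s (s+1) - steinChen μ s s) := by
  have h1 := G_nonneg hμ (Nat.lt_succ_self s)
  have h2 := G_nonpos hμ (le_refl s)
  nlinarith

lemma sub_mul_G_le (hμ : 0 < μ) (s : ℕ) :
    ((s:ℝ) - μ) * steinChen μ s s ≤ pois μ s := by
  cases s with
  | zero =>
      have h0 : steinChen μ 0 0 = 0 := rfl
      rw [h0]
      simpa using (pois_pos hμ 0).le
  | succ i =>
      rcases le_or_gt μ ((i:ℝ)+1) with hle | hgt
      · have h1 : (0:ℝ) ≤ ((i+1:ℕ):ℝ) - μ := by push_cast; linarith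
        have h2 : steinChen μ (i+1) (i+1) ≤ 0 := G_nonpos hμ (le_refl _)
        have := mul_nonpos_of_nonneg_of_nonpos h1 h2
        linarith [(pois_pos hμ (i+1)).le]
      · have hi : ¬ ((i+1:ℕ) ≤ i) := by omega
        rw [G_eq_low hμ hi]
        have hp : (0:ℝ) < μ ^ (i+1) := pow_pos hμ _
        have hπ := (pois_pos hμ (i+1)).le
        have hkey : (μ - ((i:ℝ)+1)) * S μ (i+1) ≤ ((i:ℝ)+1) * p μ (i+1) := by
          have := shift_sum hμ (i+1)
          push_cast at this
          linarith
        have hfp : ((i:ℝ)+1) * ((Nat.factorial i : ℝ) * p μ (i+1)) = μ ^ (i+1) := by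
          have h := fact_mul_p (μ := μ) (i+1)
          rw [Nat.factorial_succ] at h
          push_cast at h
          linarith
        have heq : (((i+1:ℕ):ℝ) - μ) * (-((Nat.factorial i : ℝ) * pois μ (i+1) * S μ (i+1)) / μ ^ (i+1))
            = pois μ (i+1) * ((μ - ((i:ℝ)+1)) * ((Nat.factorial i : ℝ) * S μ (i+1))) / μ ^ (i+1) := by
          push_cast
          ring
        rw [heq, div_le_iff₀ hp]
        have hfi : (0:ℝ) ≤ (Nat.factorial i : ℝ) := Nat.cast_nonneg _
        have hkey2 : (μ - ((i:ℝ)+1)) * ((Nat.factorial i : ℝ) * S μ (i+1)) ≤ μ ^ (i+1) := by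
          calc (μ - ((i:ℝ)+1)) * ((Nat.factorial i : ℝ) * S μ (i+1))
              = (Nat.factorial i : ℝ) * ((μ - ((i:ℝ)+1)) * S μ (i+1)) := by ring
            _ ≤ (Nat.factorial i : ℝ) * (((i:ℝ)+1) * p μ (i+1)) :=
                mul_le_mul_of_nonneg_left hkey hfi
            _ = ((i:ℝ)+1) * ((Nat.factorial i : ℝ) * p μ (i+1)) := by ring
            _ = μ ^ (i+1) := hfp
        nlinarith

lemma delta_le_one (hμ : 0 < μ) (s : ℕ) :
    μ * (steinChen μ s (s+1) - steinChen μ s s) ≤ 1 := by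
  have h := stein_eq hμ s s
  rw [if_pos rfl] at h
  have hsub := sub_mul_G_le hμ s
  have hπ := (pois_pos hμ s).le
  nlinarith

def Hfun (μ : ℝ) (s : ℕ) (j : ℕ) : ℝ :=
  μ * (steinChen μ s j - steinChen μ s (j+1))
    + (if j = s then 2 * (μ * (steinChen μ s (s+1) - steinChen μ s s)) + 1 else 0)

lemma Hfun_nonneg (hμ : 0 < μ) (s j : ℕ) : 0 ≤ Hfun μ s j := by
  rcases lt_trichotomy j s with h | h | h
  · rw [Hfun, if_neg (by omega)]
    have := G_antitone_low hμ h
    nlinarith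
  · subst h
    rw [Hfun, if_pos rfl]
    have := delta_nonneg hμ j
    nlinarith
  · rw [Hfun, if_neg (by omega)]
    have := G_antitone_high hμ h
    nlinarith

lemma Hfun_sum_le (hμ : 0 < μ) (s : ℕ) (n : ℕ) :
    ∑ j ∈ Finset.range n, Hfun μ s j ≤ 3 := by
  have hδ0 := delta_nonneg hμ s
  have hδ1 := delta_le_one hμ s
  have hsplit : ∑ j ∈ Finset.range n, Hfun μ s j
      = (∑ j ∈ Finset.range n, (μ * steinChen μ s j - μ * steinChen μ s (j+1)))
        + ∑ j ∈ Finset.range n,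
            (if j = s then 2 * (μ * (steinChen μ s (s+1) - steinChen μ s s)) + 1 else 0) := by
    rw [← Finset.sum_add_distrib]
    refine Finset.sum_congr rfl fun j _ => ?_
    rw [Hfun]
    ring_nf
  have htel : ∑ j ∈ Finset.range n, (μ * steinChen μ s j - μ * steinChen μ s (j+1))
      = - (μ * steinChen μ s n) := by
    rw [Finset.sum_range_sub' (f := fun j => μ * steinChen μ s j)]
    have h0 : steinChen μ s 0 = 0 := rfl
    rw [h0]
    ring
  have hite : ∑ j ∈ Finset.range n,
      (if j = s then 2 * (μ * (steinChen μ s (s+1) - steinChen μ s s)) + 1 else 0)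
      = if s ∈ Finset.range n then 2 * (μ * (steinChen μ s (s+1) - steinChen μ s s)) + 1 else 0 := by
    rw [Finset.sum_ite_eq' (Finset.range n) s
      (fun _ => 2 * (μ * (steinChen μ s (s+1) - steinChen μ s s)) + 1)]
  rw [hsplit, htel, hite]
  by_cases hn : s ∈ Finset.range n
  · rw [if_pos hn]
    have hsn : s < n := Finset.mem_range.mp hn
    have hGn : 0 ≤ steinChen μ s n := G_nonneg hμ hsn
    nlinarith
  · rw [if_neg hn]
    have hsn : n ≤ s := by
      have := Finset.mem_range.not.mp hn
      omega
    have hmono : steinChen μ s s ≤ steinChen μ s n := G_antitone_of_le hμ n s hsn (le_refl s)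
    have hGs1 : 0 ≤ steinChen μ s (s+1) := G_nonneg hμ (Nat.lt_succ_self s)
    nlinarith

lemma pointwise_bound (hμ : 0 < μ) (s j : ℕ) :
    |((j:ℝ) - μ) * steinChen μ s j| ≤ Hfun μ s j + pois μ s := by
  have hst := stein_eq hμ s j
  have hπ0 := (pois_pos hμ s).le
  have hπ1 := pois_le_one hμ s
  by_cases hj : j = s
  · subst hj
    rw [if_pos rfl] at hst
    have hval : ((j:ℝ) - μ) * steinChen μ j j
        = μ * (steinChen μ j (j+1) - steinChen μ j j) - 1 + pois μ j := by
      linear_combination -hst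
    rw [hval, Hfun, if_pos rfl]
    have hδ0 := delta_nonneg hμ j
    have hδ1 := delta_le_one hμ j
    rw [abs_le]
    constructor <;> nlinarith
  · rw [if_neg hj] at hst
    have hval : ((j:ℝ) - μ) * steinChen μ s j
        = pois μ s - μ * (steinChen μ s j - steinChen μ s (j+1)) := by
      linear_combination -hst
    have hD : 0 ≤ μ * (steinChen μ s j - steinChen μ s (j+1)) := by
      rcases lt_or_gt_of_ne hj with h | h
      · have := G_antitone_low hμ h
        nlinarith
      · have := G_antitone_high hμ h
        nlinarith
    rw [hval, Hfun, if_neg hj]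
    rw [abs_le]
    constructor <;> nlinarith

end SteinBound

/-- There is a nonnegative `h` with `Σ_l h(l) ≤ 3` such that
`|(l − ⟨μ⟩)·ĝ_{μ,r}(l)| ≤ h(l) + Po(μ){r + ⌊μ⌋}` for all `l`. -/
theorem ghat_weighted_bound (μ : ℝ) (hμ : 0 < μ) (r : ℤ) (hr : 0 ≤ r + ⌊μ⌋) :
    ∃ h : ℤ → ℝ, (∀ l : ℤ, 0 ≤ h l) ∧ Summable h ∧ (∑' l : ℤ, h l) ≤ 3 ∧
      ∀ l : ℤ, |((l : ℝ) - (μ - ⌊μ⌋)) * ghat μ r l|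
        ≤ h l + Real.exp (-μ) * μ ^ (r + ⌊μ⌋).toNat / (Nat.factorial (r + ⌊μ⌋).toNat : ℝ) := by

  classical
  open SteinBound in
  set s : ℕ := (r + ⌊μ⌋).toNat with hs
  have hm0 : (0:ℤ) ≤ ⌊μ⌋ := Int.floor_nonneg.mpr hμ.le
  set h : ℤ → ℝ := fun l => if l < -⌊μ⌋ then 0 else SteinBound.Hfun μ s (l + ⌊μ⌋).toNat with hh
  have hnonneg : ∀ l : ℤ, 0 ≤ h l := by
    intro l
    rw [hh]
    dsimp only
    split_ifs
    · exact le_refl 0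
    · exact SteinBound.Hfun_nonneg hμ s _
  have hsummH : Summable (SteinBound.Hfun μ s) :=
    summable_of_sum_range_le (fun n => SteinBound.Hfun_nonneg hμ s n) (SteinBound.Hfun_sum_le hμ s)
  have hinj : Function.Injective (fun n : ℕ => (n:ℤ) - ⌊μ⌋) := by
    intro a b hab
    simpa using hab
  have hcomp : ∀ n : ℕ, h ((n:ℤ) - ⌊μ⌋) = SteinBound.Hfun μ s n := by
    intro n
    rw [hh]
    dsimp only
    rw [if_neg (by omega)]
    congr 1
    omega
  have hzero : ∀ l : ℤ, l ∉ Set.range (fun n : ℕ => (n:ℤ) - ⌊μ⌋) → h l = 0 := by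
    intro l hl
    have hlt : l < -⌊μ⌋ := by
      by_contra hcon
      push_neg at hcon
      exact hl ⟨(l + ⌊μ⌋).toNat, by simp only; omega⟩
    rw [hh]
    dsimp only
    rw [if_pos hlt]
  have hsupp : Function.support h ⊆ Set.range (fun n : ℕ => (n:ℤ) - ⌊μ⌋) := by
    intro l hl
    by_contra hcon
    exact hl (hzero l hcon)
  have hsummable : Summable h := by
    refine (hinj.summable_iff hzero).mp ?_
    exact hsummH.congr fun n => (hcomp n).symm
  have htsum : (∑' l : ℤ, h l) ≤ 3 := by
    rw [← Function.Injective.tsum_eq hinj hsupp]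
    have : ∑' n : ℕ, h ((n:ℤ) - ⌊μ⌋) = ∑' n : ℕ, SteinBound.Hfun μ s n := tsum_congr hcomp
    rw [this]
    exact Real.tsum_le_of_sum_range_le (fun n => SteinBound.Hfun_nonneg hμ s n)
      (SteinBound.Hfun_sum_le hμ s)
  refine ⟨h, hnonneg, hsummable, htsum, ?_⟩
  intro l
  have hpois : Real.exp (-μ) * μ ^ (r + ⌊μ⌋).toNat / (Nat.factorial (r + ⌊μ⌋).toNat : ℝ)
      = SteinBound.pois μ s := by rw [← hs]; rfl
  rw [hpois]
  by_cases hl : l < -⌊μ⌋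
  · have hg : ghat μ r l = 0 := by rw [ghat, if_pos hl]
    rw [hg, mul_zero, abs_zero]
    have h0 : h l = 0 := by rw [hh]; dsimp only; rw [if_pos hl]
    rw [h0, zero_add]
    exact (SteinBound.pois_pos hμ s).le
  · have hg : ghat μ r l = steinChen μ s (l + ⌊μ⌋).toNat := by
      rw [ghat, if_neg hl, ← hs]
    have hcast : (((l + ⌊μ⌋).toNat : ℕ) : ℝ) = (l:ℝ) + (⌊μ⌋:ℝ) := by
      have h1 : (((l + ⌊μ⌋).toNat : ℕ) : ℤ) = l + ⌊μ⌋ := by omega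
      have h2 : ((((l + ⌊μ⌋).toNat : ℕ) : ℤ) : ℝ) = ((l + ⌊μ⌋ : ℤ) : ℝ) := by
        exact_mod_cast congrArg (fun z : ℤ => (z : ℝ)) h1
      push_cast at h2
      linarith
    have heq : ((l : ℝ) - (μ - ⌊μ⌋)) = (((l + ⌊μ⌋).toNat : ℕ) : ℝ) - μ := by
      rw [hcast]; ring
    rw [hg, heq]
    have hb := SteinBound.pointwise_bound hμ s (l + ⌊μ⌋).toNat
    have hhl : h l = SteinBound.Hfun μ s (l + ⌊μ⌋).toNat := by
      rw [hh]; dsimp only; rw [if_neg hl]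
    rw [hhl]
    exact hb
end
end

section
/- For every μ > 0, the Poisson distribution with mean μ satisfies sup_{k ∈ ℕ} e^{−μ}·μ^k/k! ≤ 1/(2·√μ). -/
open Real

/-- `x ≤ exp (x - 1)` for all real `x`. -/
lemma aux_le_exp_sub_one (x : ℝ) : x ≤ Real.exp (x - 1) := by
  have := Real.add_one_le_exp (x - 1)
  linarith

/-- Stirling's lower bound via the antitone Stirling sequence. -/
lemma aux_sqrt_pi_le_stirlingSeq (n : ℕ) (hn : 1 ≤ n) :
    Real.sqrt π ≤ Stirling.stirlingSeq n := by
  obtain ⟨m, rfl⟩ := Nat.exists_eq_add_of_le hn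
  have htend : Filter.Tendsto (Stirling.stirlingSeq ∘ Nat.succ) Filter.atTop (nhds (Real.sqrt π)) := by
    have := (Filter.tendsto_add_atTop_iff_nat 1).2 Stirling.tendsto_stirlingSeq_sqrt_pi
    exact this
  have := Stirling.stirlingSeq'_antitone.le_of_tendsto htend m
  simpa [Nat.succ_eq_add_one, Nat.add_comm] using this

/-- The key elementary inequality `t^3 * exp (2 - 2t) ≤ π / 2` for `t > 0`. -/
lemma aux_cube_exp_le (t : ℝ) (ht : 0 < t) : t ^ 3 * Real.exp (2 - 2 * t) ≤ π / 2 := by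
  set x : ℝ := 2 * t / 3 with hx
  have hx0 : 0 < x := by positivity
  have h1 : x ^ 3 ≤ Real.exp (3 * (x - 1)) := by
    have hb := aux_le_exp_sub_one x
    calc x ^ 3 ≤ (Real.exp (x - 1)) ^ 3 := by
          exact pow_le_pow_left₀ hx0.le hb 3
      _ = Real.exp (3 * (x - 1)) := by
          rw [← Real.exp_nat_mul]; ring_nf
  have h2 : t ^ 3 * Real.exp (2 - 2 * t) ≤ 27 / 8 * Real.exp (-1) := by
    have ht3 : t = 3 * x / 2 := by rw [hx]; ring
    have e : t ^ 3 * Real.exp (2 - 2 * t) = 27 / 8 * (x ^ 3 * Real.exp (2 - 3 * x)) := by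
      rw [ht3]; ring_nf
    rw [e]
    have h3 : x ^ 3 * Real.exp (2 - 3 * x) ≤ Real.exp (-1) := by
      calc x ^ 3 * Real.exp (2 - 3 * x) ≤ Real.exp (3 * (x - 1)) * Real.exp (2 - 3 * x) :=
            mul_le_mul_of_nonneg_right h1 (Real.exp_pos _).le
        _ = Real.exp (-1) := by rw [← Real.exp_add]; ring_nf
    nlinarith
  refine h2.trans ?_
  -- `27/8 * exp (-1) ≤ π / 2` i.e. `27/4 ≤ π * exp 1`
  have he : (2.7182818283 : ℝ) < Real.exp 1 := Real.exp_one_gt_d9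
  have hpi : (3.141592 : ℝ) < π := Real.pi_gt_d6
  have hexp : Real.exp (-1) = 1 / Real.exp 1 := by
    rw [Real.exp_neg]; simp [one_div]
  rw [hexp, mul_one_div, div_le_div_iff₀ (Real.exp_pos 1) (by norm_num)]
  nlinarith [Real.exp_pos 1]

/-- For every `μ > 0`, the point probabilities of the Poisson distribution with
mean `μ` satisfy `sup_k Po(μ){k} ≤ 1/(2√μ)`. -/
theorem poisson_point_prob_le (μ : ℝ) (hμ : 0 < μ) (k : ℕ) :
    Real.exp (-μ) * μ ^ k / (Nat.factorial k : ℝ) ≤ 1 / (2 * Real.sqrt μ) := by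
  have hsμ : 0 < Real.sqrt μ := Real.sqrt_pos.2 hμ
  rcases Nat.eq_zero_or_pos k with rfl | hk
  · -- k = 0 : exp (-μ) ≤ 1 / (2 √μ)
    simp only [pow_zero, mul_one, Nat.factorial_zero, Nat.cast_one, div_one]
    have h : 2 * Real.sqrt μ ≤ Real.exp μ := by
      nlinarith [sq_nonneg (Real.sqrt μ - 1), Real.sq_sqrt hμ.le, Real.add_one_le_exp μ]
    rw [Real.exp_neg, ← one_div]
    exact one_div_le_one_div_of_le (by positivity) h
  · -- k ≥ 1
    have hk1 : (1 : ℝ) ≤ (k : ℝ) := by exact_mod_cast hk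
    have hkpos : (0 : ℝ) < (k : ℝ) := by linarith
    set t : ℝ := μ / k with htdef
    have ht : 0 < t := by positivity
    have hμt : μ = t * k := by rw [htdef, div_mul_cancel₀ μ hkpos.ne']
    -- Stirling lower bound: √π * √(2k) * (k/e)^k ≤ k!
    have hstir : Real.sqrt π * Real.sqrt (2 * k) * ((k : ℝ) / Real.exp 1) ^ k
        ≤ (Nat.factorial k : ℝ) := by
      have hs := aux_sqrt_pi_le_stirlingSeq k hk
      unfold Stirling.stirlingSeq at hs
      have hden : 0 < Real.sqrt (2 * k) * ((k : ℝ) / Real.exp 1) ^ k := by positivity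
      rw [le_div_iff₀ hden] at hs
      linarith
    have hbase : t * Real.exp (1 - t) ≤ 1 := by
      have := aux_le_exp_sub_one t
      calc t * Real.exp (1 - t) ≤ Real.exp (t - 1) * Real.exp (1 - t) :=
            mul_le_mul_of_nonneg_right this (Real.exp_pos _).le
        _ = 1 := by rw [← Real.exp_add]; ring_nf; exact Real.exp_zero
    have hbase0 : 0 ≤ t * Real.exp (1 - t) := by positivity
    -- rewrite the numerator
    have h1 : t * Real.exp (1 - t) * ((k : ℝ) / Real.exp 1) = t * k * Real.exp (-t) := by
      rw [Real.exp_sub, Real.exp_neg]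
      field_simp [Real.exp_ne_zero]
    have hnum : Real.exp (-μ) * μ ^ k
        = (t * Real.exp (1 - t)) ^ k * ((k : ℝ) / Real.exp 1) ^ k := by
      rw [← mul_pow, h1, ← hμt, mul_pow, ← Real.exp_nat_mul]
      have e : (k : ℝ) * (-t) = -μ := by rw [hμt]; ring
      rw [e]; ring
    have hpow : (t * Real.exp (1 - t)) ^ k ≤ t * Real.exp (1 - t) :=
      pow_le_of_le_one hbase0 hbase (by omega)
    -- main estimate
    have key : t * Real.exp (1 - t) / (Real.sqrt π * Real.sqrt (2 * k)) ≤ 1 / (2 * Real.sqrt μ) := by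
      rw [div_le_div_iff₀ (by positivity) (by positivity)]
      have hsq : (t * Real.exp (1 - t) * (2 * Real.sqrt μ)) ^ 2
          ≤ (Real.sqrt π * Real.sqrt (2 * k) * 1) ^ 2 := by
        have hs2 : Real.sqrt μ ^ 2 = μ := Real.sq_sqrt hμ.le
        have hee : Real.exp (2 - 2 * t) = Real.exp (1 - t) * Real.exp (1 - t) := by
          rw [← Real.exp_add]; ring_nf
        have e1 : (t * Real.exp (1 - t) * (2 * Real.sqrt μ)) ^ 2
            = 4 * μ * (t ^ 2 * Real.exp (2 - 2 * t)) := by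
          rw [hee]
          linear_combination (4 * t ^ 2 * Real.exp (1 - t) * Real.exp (1 - t)) * hs2
        have e2 : (Real.sqrt π * Real.sqrt (2 * k) * 1) ^ 2 = π * (2 * k) := by
          rw [mul_one, mul_pow, Real.sq_sqrt Real.pi_pos.le, Real.sq_sqrt (by positivity)]
        rw [e1, e2, hμt]
        have := aux_cube_exp_le t ht
        nlinarith [Real.exp_pos (2 - 2 * t)]
      have hn1 : 0 ≤ t * Real.exp (1 - t) * (2 * Real.sqrt μ) := by positivity
      have hn2 : 0 ≤ Real.sqrt π * Real.sqrt (2 * k) * 1 := by positivity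
      have := (pow_le_pow_iff_left₀ hn1 hn2 two_ne_zero).mp hsq
      linarith
    -- combine
    have hfac : (0 : ℝ) < (Nat.factorial k : ℝ) := by exact_mod_cast k.factorial_pos
    calc Real.exp (-μ) * μ ^ k / (Nat.factorial k : ℝ)
        = (t * Real.exp (1 - t)) ^ k * ((k : ℝ) / Real.exp 1) ^ k / (Nat.factorial k : ℝ) := by
          rw [hnum]
      _ ≤ (t * Real.exp (1 - t)) ^ k * ((k : ℝ) / Real.exp 1) ^ k
            / (Real.sqrt π * Real.sqrt (2 * k) * ((k : ℝ) / Real.exp 1) ^ k) := by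
          gcongr
      _ = (t * Real.exp (1 - t)) ^ k / (Real.sqrt π * Real.sqrt (2 * k)) :=
          mul_div_mul_right _ _ (by positivity)
      _ ≤ t * Real.exp (1 - t) / (Real.sqrt π * Real.sqrt (2 * k)) := by
          gcongr
      _ ≤ 1 / (2 * Real.sqrt μ) := key
end
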